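/- arXiv:2511.21110 — 11 statements merged into one kernel-verified Lean document; each statement's English description precedes it below -/
import Mathlib

section
/- Let (a_n)_{n≥1} be a nonincreasing sequence of positive real numbers with ∑_{n=1}^∞ a_n = 1, and suppose that a_n ≤ 1 − ∑_{k=1}^n a_k for all n ≥ 1. Then every real number r with 0 ≤ r ≤ 1 can be represented as r = ∑_{n=1}^∞ ε_n a_n for some choice of coefficients ε_n ∈ {0,1}. -/
noncomputable def greedyS (a : ℕ → ℝ) (r : ℝ) : ℕ → ℝ
  | 0 => 0
  | n + 1 => if greedyS a r n + a n ≤ r then greedyS a r n + a n else greedyS a r n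

/-- If `(a_n)` is a nonincreasing positive sequence summing to `1` and
`a_n ≤ 1 − ∑_{k=1}^n a_k` for all `n`, then every `r ∈ [0,1]` is a subsum
`r = ∑ ε_n a_n` with `ε_n ∈ {0,1}`. (Sequences are 0-indexed.) -/
theorem stmt0 (a : ℕ → ℝ) (hpos : ∀ n, 0 < a n) (hmono : Antitone a)
    (hsummable : Summable a) (hsum : (∑' n, a n) = 1)
    (hcond : ∀ n, a n ≤ 1 - ∑ k ∈ Finset.range (n + 1), a k)
    (r : ℝ) (hr0 : 0 ≤ r) (hr1 : r ≤ 1) :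
    ∃ ε : ℕ → ℝ, (∀ n, ε n = 0 ∨ ε n = 1) ∧ HasSum (fun n => ε n * a n) r := by
  set S := greedyS a r with hS
  set ε : ℕ → ℝ := fun n => if S n + a n ≤ r then 1 else 0 with hε
  have hsum_eq : ∀ n, ∑ k ∈ Finset.range n, ε k * a k = S n := by
    intro n
    induction n with
    | zero => simp [hS, greedyS]
    | succ n ih =>
      rw [Finset.sum_range_succ, ih, hε]
      by_cases h : S n + a n ≤ r
      · simp [hS, greedyS, (show greedyS a r n + a n ≤ r from h)]
      · simp [hS, greedyS, (show ¬ (greedyS a r n + a n ≤ r) from h)]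
  have hle : ∀ n, S n ≤ r := by
    intro n
    induction n with
    | zero => simpa [hS, greedyS] using hr0
    | succ n ih =>
      rw [hS, greedyS]
      split
      · assumption
      · exact ih
  have hgap : ∀ n, r - S n ≤ 1 - ∑ k ∈ Finset.range n, a k := by
    intro n
    induction n with
    | zero => simp [hS, greedyS]; linarith
    | succ n ih =>
      rw [hS, greedyS, Finset.sum_range_succ]
      split
      · next h => rw [hS] at ih; linarith
      · next h =>
        push_neg at h
        have := hcond n
        rw [Finset.sum_range_succ] at this
        rw [hS] at ih
        linarith
  refine ⟨ε, fun n => ?_, ?_⟩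
  · by_cases h : S n + a n ≤ r <;> simp [hε, h]
  · have hsummable' : Summable (fun n => ε n * a n) := by
      apply Summable.of_nonneg_of_le _ _ hsummable
      · intro n
        by_cases h : S n + a n ≤ r <;> simp [hε, h] <;> exact (hpos n).le
      · intro n
        by_cases h : S n + a n ≤ r <;> simp [hε, h] <;> exact (hpos n).le
    rw [hsummable'.hasSum_iff_tendsto_nat]
    have htail : Filter.Tendsto (fun n => 1 - ∑ k ∈ Finset.range n, a k)
        Filter.atTop (nhds 0) := by
      have := hsummable.hasSum.tendsto_sum_nat
      rw [hsum] at this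
      have := this.const_sub 1
      simpa using this
    have hS0 : Filter.Tendsto S Filter.atTop (nhds r) := by
      have h1 : Filter.Tendsto (fun n => r - S n) Filter.atTop (nhds 0) := by
        apply squeeze_zero (fun n => by linarith [hle n]) hgap htail
      have := h1.const_sub r
      simpa using this
    simpa only [hsum_eq] using hS0
end

section
/- Let (a_n)_{n≥1} be a nonincreasing sequence of positive real numbers with ∑_{n=1}^∞ a_n = 1. If every real number r with 0 ≤ r ≤ 1 can be represented as r = ∑_{n=1}^∞ ε_n a_n for some coefficients ε_n ∈ {0,1}, then a_n ≤ 1 − ∑_{k=1}^n a_k for all n ≥ 1. -/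
/-- If `(a_n)` is a nonincreasing positive sequence summing to `1` and every
`r ∈ [0,1]` is a subsum `r = ∑ ε_n a_n` with `ε_n ∈ {0,1}`, then
`a_n ≤ 1 − ∑_{k=1}^n a_k` for all `n`. (Sequences are 0-indexed.) -/
theorem stmt1 (a : ℕ → ℝ) (hpos : ∀ n, 0 < a n) (hmono : Antitone a)
    (hsummable : Summable a) (hsum : (∑' n, a n) = 1)
    (hrep : ∀ r : ℝ, 0 ≤ r → r ≤ 1 →
      ∃ ε : ℕ → ℝ, (∀ n, ε n = 0 ∨ ε n = 1) ∧ HasSum (fun n => ε n * a n) r) :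
    ∀ n, a n ≤ 1 - ∑ k ∈ Finset.range (n + 1), a k := by
  intro n
  have hsplit := Summable.sum_add_tsum_nat_add (n + 1) hsummable
  rw [hsum] at hsplit
  set T : ℝ := ∑' k, a (k + (n + 1)) with hTdef
  have hgoal : a n ≤ T → a n ≤ 1 - ∑ k ∈ Finset.range (n + 1), a k := by
    intro h; linarith
  apply hgoal
  by_contra hlt
  push_neg at hlt
  have hTnn : 0 ≤ T := tsum_nonneg fun k => (hpos _).le
  have han1 : a n ≤ 1 := by
    rw [← hsum]
    exact Summable.le_tsum hsummable n fun j _ => (hpos j).le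
  set r : ℝ := (T + a n) / 2 with hrdef
  have hr0 : 0 ≤ r := by rw [hrdef]; have := hpos n; linarith
  have hr1 : r ≤ 1 := by
    have : r ≤ a n := by rw [hrdef]; linarith
    linarith
  have hrlt : r < a n := by rw [hrdef]; linarith
  have hTr : T < r := by rw [hrdef]; linarith
  obtain ⟨ε, hε, hs⟩ := hrep r hr0 hr1
  have hεnn : ∀ m, 0 ≤ ε m * a m := by
    intro m
    rcases hε m with h | h <;> rw [h] <;> [simp; simpa using (hpos m).le]
  by_cases hcase : ∃ k ≤ n, ε k = 1
  · obtain ⟨k, hk, hεk⟩ := hcase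
    have h1 : ε k * a k ≤ r := by
      rw [← hs.tsum_eq]
      exact Summable.le_tsum hs.summable k fun j _ => hεnn j
    rw [hεk, one_mul] at h1
    have := hmono hk
    linarith
  · push_neg at hcase
    have hzero : ∀ k ≤ n, ε k = 0 := by
      intro k hk
      rcases hε k with h | h
      · exact h
      · exact absurd h (hcase k hk)
    have hsplit2 := Summable.sum_add_tsum_nat_add (n + 1) hs.summable
    rw [hs.tsum_eq] at hsplit2
    have hfin : (∑ k ∈ Finset.range (n + 1), ε k * a k) = 0 := by
      apply Finset.sum_eq_zero
      intro k hk
      have hk' := Finset.mem_range.mp hk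
      rw [hzero k (by omega), zero_mul]
    rw [hfin, zero_add] at hsplit2
    have htail : (∑' k, ε (k + (n + 1)) * a (k + (n + 1))) ≤ T := by
      apply Summable.tsum_le_tsum
      · intro k
        rcases hε (k + (n + 1)) with h | h <;> rw [h]
        · simpa using (hpos _).le
        · simp
      · exact (summable_nat_add_iff (f := fun m => ε m * a m) (n + 1)).2 hs.summable
      · exact (summable_nat_add_iff (f := a) (n + 1)).2 hsummable
    rw [hsplit2] at htail
    linarith
end

section
/- Let (a_n)_{n≥1} be a nonincreasing sequence of positive real numbers with ∑_{n=1}^∞ a_n = 1. Then every real number r with 0 ≤ r ≤ 1 can be represented as r = ∑_{n=1}^∞ ε_n a_n with ε_n ∈ {0,1} for all n, if and only if a_n ≤ 1 − ∑_{k=1}^n a_k for all n ≥ 1. -/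
open Finset Filter Topology

/-- For a nonincreasing positive sequence `(a_n)` summing to `1`, every
`r ∈ [0,1]` is a subsum `r = ∑ ε_n a_n`, `ε_n ∈ {0,1}`, if and only if
`a_n ≤ 1 − ∑_{k=1}^n a_k` for all `n`. (Sequences are 0-indexed.) -/
theorem stmt2 (a : ℕ → ℝ) (hpos : ∀ n, 0 < a n) (hmono : Antitone a)
    (hsummable : Summable a) (hsum : (∑' n, a n) = 1) :
    (∀ r : ℝ, 0 ≤ r → r ≤ 1 →
      ∃ ε : ℕ → ℝ, (∀ n, ε n = 0 ∨ ε n = 1) ∧ HasSum (fun n => ε n * a n) r) ↔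
    (∀ n, a n ≤ 1 - ∑ k ∈ Finset.range (n + 1), a k) := by
  have hpartial : ∀ n, ∑ k ∈ Finset.range n, a k ≤ 1 := by
    intro n
    have := Summable.sum_le_tsum (Finset.range n) (fun i _ => (hpos i).le) hsummable
    linarith [hsum ▸ this]
  constructor
  · intro h n
    by_contra hc
    push_neg at hc
    set T := 1 - ∑ k ∈ Finset.range (n + 1), a k with hT
    have hT0 : 0 ≤ T := by have := hpartial (n + 1); linarith
    set r := (T + a n) / 2 with hrdef
    have hrT : T < r := by rw [hrdef]; linarith
    have hra : r < a n := by rw [hrdef]; linarith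
    have hr0 : 0 ≤ r := hT0.trans hrT.le
    have han1 : a n ≤ 1 := by
      have := Summable.le_tsum hsummable n (fun i _ => (hpos i).le)
      linarith [hsum ▸ this]
    have hr1 : r ≤ 1 := by linarith
    obtain ⟨ε, hε01, hεsum⟩ := h r hr0 hr1
    have hεnn : ∀ k, 0 ≤ ε k * a k := fun k => by
      rcases hε01 k with h | h <;> simp [h, (hpos k).le]
    by_cases hcase : ∃ k ≤ n, ε k = 1
    · obtain ⟨k, hk, hk1⟩ := hcase
      have h1 : ε k * a k ≤ r := le_hasSum hεsum k (fun i _ => hεnn i)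
      have h2 : a n ≤ a k := hmono hk
      rw [hk1, one_mul] at h1
      linarith
    · push_neg at hcase
      have hε0 : ∀ k ≤ n, ε k = 0 := fun k hk =>
        (hε01 k).resolve_right (hcase k hk)
      have hzero : ∑ k ∈ Finset.range (n + 1), ε k * a k = 0 := by
        apply Finset.sum_eq_zero
        intro k hk
        rw [hε0 k (Nat.lt_succ_iff.mp (Finset.mem_range.mp hk)), zero_mul]
      have hshiftf : HasSum (fun m => ε (m + (n + 1)) * a (m + (n + 1))) r := by
        refine (hasSum_nat_add_iff (f := fun k => ε k * a k) (n + 1)).2 ?_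
        rw [hzero, add_zero]
        exact hεsum
      have hshifta : HasSum (fun m => a (m + (n + 1))) T := by
        refine (hasSum_nat_add_iff (f := a) (n + 1)).2 ?_
        have heq : T + ∑ i ∈ Finset.range (n + 1), a i = 1 := by rw [hT]; ring
        rw [heq]
        exact hsum ▸ hsummable.hasSum
      have : r ≤ T := by
        refine hasSum_le (fun m => ?_) hshiftf hshifta
        rcases hε01 (m + (n + 1)) with h | h <;>
          simp [h, (hpos (m + (n + 1))).le]
      linarith
  · intro hcond r hr0 hr1
    set s : ℕ → ℝ := fun n =>
      Nat.rec 0 (fun n sn => if sn + a n ≤ r then sn + a n else sn) n with hs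
    set ε : ℕ → ℝ := fun n => if s n + a n ≤ r then 1 else 0 with hε
    have hsucc : ∀ n, s (n + 1) = s n + ε n * a n := by
      intro n
      show (if s n + a n ≤ r then s n + a n else s n) = s n + ε n * a n
      by_cases h : s n + a n ≤ r <;> simp [hε, h]
    have hεsum' : ∀ n, ∑ k ∈ Finset.range n, ε k * a k = s n := by
      intro n
      induction n with
      | zero => simp [hs]
      | succ m ih => rw [Finset.sum_range_succ, ih, hsucc]
    have hinv : ∀ n, s n ≤ r ∧ r - s n ≤ 1 - ∑ k ∈ Finset.range n, a k := by
      intro n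
      induction n with
      | zero => simp [hs]; constructor <;> linarith
      | succ m ih =>
        obtain ⟨ih1, ih2⟩ := ih
        by_cases h : s m + a m ≤ r
        · have hε1 : ε m = 1 := by simp [hε, h]
          rw [hsucc m, hε1, one_mul, Finset.sum_range_succ]
          constructor <;> linarith
        · have hε0 : ε m = 0 := by simp [hε, h]
          push_neg at h
          rw [hsucc m, hε0, zero_mul, add_zero]
          have := hcond m
          constructor
          · exact ih1
          · linarith
    have hεle : ∀ n, ε n * a n ≤ a n := by
      intro n
      by_cases h : s n + a n ≤ r <;> simp [hε, h, (hpos n).le]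
    have hεnn : ∀ n, 0 ≤ ε n * a n := by
      intro n
      by_cases h : s n + a n ≤ r <;> simp [hε, h, (hpos n).le]
    have hsummε : Summable (fun n => ε n * a n) :=
      Summable.of_nonneg_of_le hεnn hεle hsummable
    refine ⟨ε, fun n => ?_, ?_⟩
    · by_cases h : s n + a n ≤ r <;> simp [hε, h]
    · rw [hsummε.hasSum_iff_tendsto_nat]
      have htail : Tendsto (fun n => 1 - ∑ k ∈ Finset.range n, a k) atTop (𝓝 0) := by
        have h1 : Tendsto (fun n => ∑ k ∈ Finset.range n, a k) atTop (𝓝 1) :=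
          hsum ▸ hsummable.hasSum.tendsto_sum_nat
        have := h1.const_sub 1
        simpa using this
      have hstend : Tendsto s atTop (𝓝 r) := by
        have h1 : Tendsto (fun n => r - s n) atTop (𝓝 0) := by
          apply squeeze_zero (fun n => by linarith [(hinv n).1])
            (fun n => (hinv n).2) htail
        have := h1.const_sub r
        simpa using this.neg.neg
      exact hstend.congr (fun n => (hεsum' n).symm)
end

section
/- Let (a_n)_{n≥1} be a nonincreasing sequence of positive real numbers with ∑_{n=1}^∞ a_n = 1 satisfying a_n ≤ 1 − ∑_{k=1}^n a_k for all n ≥ 1, and let r ∈ [0,1]. Define recursively ε_0 = 0, r_0 = 0, and for n ≥ 1: ε_n = 1 if a_n ≤ r − r_{n−1} and ε_n = 0 otherwise, and r_n = r_{n−1} + ε_n a_n. Then for every n ≥ 1 one has 0 ≤ r − r_n ≤ 1 − ∑_{k=1}^n a_k; in particular r_n → r as n → ∞, so r = ∑_{n=1}^∞ ε_n a_n. -/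
open Classical in
/-- Greedy algorithm: with `ε_n = 1` iff `a_n ≤ r − r_{n−1}` and
`r_n = r_{n−1} + ε_n a_n` (here `R n` is the paper's `r_n` and `ε n` is the
paper's `ε_{n+1}`, sequences being 0-indexed), one has
`0 ≤ r − r_n ≤ 1 − ∑_{k=1}^n a_k` for every `n ≥ 1`; in particular `r_n → r`
and `r = ∑ ε_n a_n`. -/
theorem stmt3 (a : ℕ → ℝ) (hpos : ∀ n, 0 < a n) (hmono : Antitone a)
    (hsummable : Summable a) (hsum : (∑' n, a n) = 1)
    (hcond : ∀ n, a n ≤ 1 - ∑ k ∈ Finset.range (n + 1), a k)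
    (r : ℝ) (hr0 : 0 ≤ r) (hr1 : r ≤ 1)
    (ε R : ℕ → ℝ) (hR0 : R 0 = 0)
    (hε : ∀ n, ε n = if a n ≤ r - R n then 1 else 0)
    (hR : ∀ n, R (n + 1) = R n + ε n * a n) :
    (∀ n, 0 ≤ r - R (n + 1) ∧ r - R (n + 1) ≤ 1 - ∑ k ∈ Finset.range (n + 1), a k) ∧
    Filter.Tendsto R Filter.atTop (nhds r) ∧
    HasSum (fun n => ε n * a n) r := by
  have inv : ∀ n, 0 ≤ r - R n ∧ r - R n ≤ 1 - ∑ k ∈ Finset.range n, a k := by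
    intro n
    induction n with
    | zero => simp [hR0, hr0, hr1]
    | succ n ih =>
      obtain ⟨h0, h1⟩ := ih
      rw [hR n, hε n]
      by_cases h : a n ≤ r - R n
      · simp only [if_pos h, one_mul]
        constructor
        · linarith
        · have := Finset.sum_range_succ a n
          linarith
      · simp only [if_neg h, zero_mul]
        push_neg at h
        constructor
        · linarith
        · have := hcond n
          linarith
  refine ⟨fun n => inv (n + 1), ?_, ?_⟩
  · have htail : Filter.Tendsto (fun n => r - R n) Filter.atTop (nhds 0) := by
      have hg : Filter.Tendsto (fun n => 1 - ∑ k ∈ Finset.range n, a k)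
          Filter.atTop (nhds 0) := by
        have := hsummable.hasSum.tendsto_sum_nat
        rw [hsum] at this
        have : Filter.Tendsto (fun n => 1 - ∑ k ∈ Finset.range n, a k)
            Filter.atTop (nhds (1 - 1)) := Filter.Tendsto.const_sub 1 this
        simpa using this
      exact squeeze_zero (fun n => (inv n).1) (fun n => (inv n).2) hg
    have := Filter.Tendsto.const_sub r htail
    simpa using this
  · have hpart : ∀ n, ∑ k ∈ Finset.range n, ε k * a k = R n := by
      intro n
      induction n with
      | zero => simp [hR0]
      | succ n ih => rw [Finset.sum_range_succ, ih, hR n]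
    have hsummε : Summable (fun n => ε n * a n) := by
      apply Summable.of_nonneg_of_le (fun n => ?_) (fun n => ?_) hsummable
      · rw [hε n]; split <;> simp [(hpos n).le]
      · rw [hε n]; split <;> simp [(hpos n).le]
    rw [hsummε.hasSum_iff_tendsto_nat]
    have htail : Filter.Tendsto (fun n => r - R n) Filter.atTop (nhds 0) := by
      have hg : Filter.Tendsto (fun n => 1 - ∑ k ∈ Finset.range n, a k)
          Filter.atTop (nhds 0) := by
        have := hsummable.hasSum.tendsto_sum_nat
        rw [hsum] at this
        have : Filter.Tendsto (fun n => 1 - ∑ k ∈ Finset.range n, a k)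
            Filter.atTop (nhds (1 - 1)) := Filter.Tendsto.const_sub 1 this
        simpa using this
      exact squeeze_zero (fun n => (inv n).1) (fun n => (inv n).2) hg
    have := Filter.Tendsto.const_sub r htail
    simp only [sub_zero] at this
    simpa [hpart] using (by simpa using this : Filter.Tendsto R Filter.atTop (nhds r))
end

section
/- Let (a_n)_{n≥1} be a nonincreasing sequence of positive real numbers with ∑_{n=1}^∞ a_n = 1. Then the set of subsums S = { ∑_{n∈A} a_n : A ⊆ {1,2,3,…} } is a convex subset of ℝ if and only if a_n ≤ 1 − ∑_{k=1}^n a_k for all n ≥ 1; moreover, when this condition holds, S = [0,1]. -/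
open Classical in
/-- Greedy partial sums. -/
noncomputable def greedy (a : ℕ → ℝ) (x : ℝ) : ℕ → ℝ
  | 0 => 0
  | n + 1 => greedy a x n + (if greedy a x n + a n ≤ x then a n else 0)

/-- For a nonincreasing positive sequence `(a_n)` summing to `1`, the set of
subsums `S = {∑_{n ∈ A} a_n : A ⊆ ℕ}` is convex iff
`a_n ≤ 1 − ∑_{k=1}^n a_k` for all `n`; moreover when this condition holds,
`S = [0,1]`. (Sequences are 0-indexed.) -/
theorem stmt4 (a : ℕ → ℝ) (hpos : ∀ n, 0 < a n) (hmono : Antitone a)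
    (hsummable : Summable a) (hsum : (∑' n, a n) = 1) :
    (Convex ℝ {x : ℝ | ∃ A : Set ℕ, HasSum (A.indicator a) x} ↔
      (∀ n, a n ≤ 1 - ∑ k ∈ Finset.range (n + 1), a k)) ∧
    ((∀ n, a n ≤ 1 - ∑ k ∈ Finset.range (n + 1), a k) →
      {x : ℝ | ∃ A : Set ℕ, HasSum (A.indicator a) x} = Set.Icc 0 1) := by
  classical
  set S := {x : ℝ | ∃ A : Set ℕ, HasSum (A.indicator a) x} with hSdef
  have ha1 : HasSum a 1 := hsum ▸ hsummable.hasSum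
  have hanneg : ∀ n, 0 ≤ a n := fun n => (hpos n).le
  have hsub : ∀ x ∈ S, x ∈ Set.Icc 0 1 := by
    rintro x ⟨A, hA⟩
    constructor
    · exact hasSum_le (fun k => Set.indicator_nonneg (fun i _ => hanneg i) k)
        hasSum_zero hA
    · exact hasSum_le (fun k => Set.indicator_le_self' (fun i _ => hanneg i) k) hA ha1
  have key : (∀ n, a n ≤ 1 - ∑ k ∈ Finset.range (n + 1), a k) → S = Set.Icc 0 1 := by
    intro hcond
    apply Set.Subset.antisymm (fun x hx => hsub x hx)
    rintro x ⟨hx0, hx1⟩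
    set A : Set ℕ := {n | greedy a x n + a n ≤ x} with hA
    have hpart : ∀ n, ∑ k ∈ Finset.range n, A.indicator a k = greedy a x n := by
      intro n
      induction n with
      | zero => simp [greedy]
      | succ n ih =>
        rw [Finset.sum_range_succ, ih]
        by_cases h : greedy a x n + a n ≤ x
        · have hn : n ∈ A := h
          simp [greedy, Set.indicator_of_mem hn, h]
        · have hn : n ∉ A := h
          simp [greedy, Set.indicator_of_notMem hn, h]
    have hinv : ∀ n, greedy a x n ≤ x ∧
        x ≤ greedy a x n + (1 - ∑ k ∈ Finset.range n, a k) := by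
      intro n
      induction n with
      | zero => simpa [greedy] using ⟨hx0, hx1⟩
      | succ n ih =>
        by_cases h : greedy a x n + a n ≤ x
        · refine ⟨by simpa [greedy, h] using h, ?_⟩
          have h2 := ih.2
          rw [Finset.sum_range_succ]
          simp only [greedy, if_pos h]
          linarith
        · refine ⟨by simpa [greedy, h] using ih.1, ?_⟩
          have h2 := hcond n
          simp only [greedy, if_neg h]
          push_neg at h
          have h3 : ∑ k ∈ Finset.range (n + 1), a k
              = ∑ k ∈ Finset.range n, a k + a n := Finset.sum_range_succ a n
          linarith
    have hsumtend : Filter.Tendsto (fun n => ∑ k ∈ Finset.range n, a k)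
        Filter.atTop (nhds 1) := ha1.tendsto_sum_nat
    have htend : Filter.Tendsto (fun n => greedy a x n) Filter.atTop (nhds x) := by
      refine tendsto_of_tendsto_of_tendsto_of_le_of_le
        (g := fun n => x - (1 - ∑ k ∈ Finset.range n, a k))
        (h := fun _ => x) ?_ tendsto_const_nhds ?_ ?_
      · have : Filter.Tendsto (fun n => (1:ℝ) - ∑ k ∈ Finset.range n, a k)
            Filter.atTop (nhds 0) := by
          simpa using (tendsto_const_nhds (x := (1:ℝ))).sub hsumtend
        simpa using tendsto_const_nhds.sub this
      · intro n; dsimp only; linarith [(hinv n).2]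
      · intro n; dsimp only; exact (hinv n).1
    have hsA : Summable (A.indicator a) := hsummable.indicator A
    refine ⟨A, ?_⟩
    rw [hsA.hasSum_iff_tendsto_nat]
    simpa [hpart] using htend
  refine ⟨⟨?_, fun hcond => by rw [key hcond]; exact convex_Icc 0 1⟩, key⟩
  intro hconv
  by_contra hc
  push_neg at hc
  obtain ⟨N, hN⟩ := hc
  set r : ℝ := 1 - ∑ k ∈ Finset.range (N + 1), a k with hr
  have hr0 : 0 < r := by
    have h1 : ∑ k ∈ Finset.range (N + 2), a k ≤ 1 := by
      rw [← hsum]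
      exact Summable.sum_le_tsum (Finset.range (N + 2)) (fun i _ => hanneg i) hsummable
    have h2 : ∑ k ∈ Finset.range (N + 2), a k
        = ∑ k ∈ Finset.range (N + 1), a k + a (N + 1) := Finset.sum_range_succ a (N + 1)
    have := hpos (N + 1)
    simp only [hr]
    linarith
  have haN1 : a N ≤ 1 := by
    have h1 : ∑ k ∈ Finset.range (N + 1), a k ≤ 1 := by
      rw [← hsum]
      exact Summable.sum_le_tsum (Finset.range (N + 1)) (fun i _ => hanneg i) hsummable
    have h2 : a N ≤ ∑ k ∈ Finset.range (N + 1), a k :=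
      Finset.single_le_sum (fun i _ => hanneg i) (Finset.self_mem_range_succ N)
    linarith
  set m : ℝ := (r + a N) / 2 with hm
  have hrm : r < m := by simp only [hm]; linarith
  have hma : m < a N := by simp only [hm]; linarith
  have hm0 : 0 < m := by linarith
  have h0S : (0:ℝ) ∈ S := ⟨∅, by simpa using hasSum_zero⟩
  have h1S : (1:ℝ) ∈ S := ⟨Set.univ, by simpa using ha1⟩
  have hmS : m ∈ S := by
    have := hconv h1S h0S hm0.le (by linarith : (0:ℝ) ≤ 1 - m) (by ring)
    simpa using this
  obtain ⟨A, hAm⟩ := hmS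
  by_cases hcase : ∃ k ∈ A, k ≤ N
  · obtain ⟨k, hkA, hkN⟩ := hcase
    have h1 : A.indicator a k ≤ m :=
      le_hasSum hAm k (fun j _ => Set.indicator_nonneg (fun i _ => hanneg i) j)
    rw [Set.indicator_of_mem hkA] at h1
    have h2 : a N ≤ a k := hmono hkN
    linarith
  · push_neg at hcase
    have hfin : HasSum ((↑(Finset.range (N + 1)) : Set ℕ).indicator a)
        (∑ k ∈ Finset.range (N + 1), a k) := by
      have h1 : HasSum ((↑(Finset.range (N + 1)) : Set ℕ).indicator a)
          (∑ k ∈ Finset.range (N + 1),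
            (↑(Finset.range (N + 1)) : Set ℕ).indicator a k) := by
        apply hasSum_sum_of_ne_finset_zero
        intro b hb
        exact Set.indicator_of_notMem (by simpa using hb) a
      have h2 : ∑ k ∈ Finset.range (N + 1),
          (↑(Finset.range (N + 1)) : Set ℕ).indicator a k
          = ∑ k ∈ Finset.range (N + 1), a k := by
        apply Finset.sum_congr rfl
        intro k hk
        exact Set.indicator_of_mem (by simpa using hk) a
      rwa [h2] at h1
    have hpt : ∀ k, (A.indicator a + (↑(Finset.range (N + 1)) : Set ℕ).indicator a) k
        ≤ a k := by
      intro k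
      by_cases hk : k ∈ A
      · have hk2 : k ∉ (↑(Finset.range (N + 1)) : Set ℕ) := by
          simp only [Finset.coe_range, Set.mem_Iio]
          exact not_lt.mpr (hcase k hk)
        rw [Pi.add_apply, Set.indicator_of_mem hk, Set.indicator_of_notMem hk2, add_zero]
      · simp only [Pi.add_apply, Set.indicator_of_notMem hk, zero_add]
        exact Set.indicator_le_self' (fun i _ => hanneg i) k
    have hle : m + ∑ k ∈ Finset.range (N + 1), a k ≤ 1 :=
      hasSum_le hpt (hAm.add hfin) ha1
    have : m ≤ r := by simp only [hr]; linarith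
    linarith
end

section
/- Let (k_n)_{n≥1} be a sequence of integers with k_n ≥ 2 for all n, and let a be the real sequence obtained by concatenating, for n = 1, 2, 3, …, a block of k_n − 1 consecutive entries each equal to 1/(k_1 k_2 ⋯ k_n). Then a belongs to K: a is positive, nonincreasing, summable with ∑_{j=1}^∞ a_j = 1, and satisfies a_j ≤ ∑_{i=j+1}^∞ a_i for all j ≥ 1. -/
/-- `K` is the set of nonincreasing positive summable sequences with sum at
most `1` satisfying `a_n ≤ ∑_{k>n} a_k` for all `n` (0-indexed). -/
def K : Set (ℕ → ℝ) :=
  {a | (∀ n, 0 < a n) ∧ Antitone a ∧ Summable a ∧ (∑' n, a n) ≤ 1 ∧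
    ∀ n, a n ≤ ∑' i, a (n + 1 + i)}

namespace Stmt7Aux

variable (k : ℕ → ℕ)

/-- The start index of block `m`. -/
def s (m : ℕ) : ℕ := ∑ i ∈ Finset.range m, (k i - 1)

/-- Product of the first `m` values of `k`, as a real number. -/
noncomputable def P (m : ℕ) : ℝ := ∏ i ∈ Finset.range m, (k i : ℝ)

variable {k}

lemma s_succ (m : ℕ) : s k (m + 1) = s k m + (k m - 1) := Finset.sum_range_succ _ _

lemma s_lt_succ (hk : ∀ n, 2 ≤ k n) (m : ℕ) : s k m < s k (m + 1) := by
  have := hk m; rw [s_succ]; omega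

lemma s_mono (hk : ∀ n, 2 ≤ k n) : StrictMono (s k) :=
  strictMono_nat_of_lt_succ (s_lt_succ hk)

lemma le_s (hk : ∀ n, 2 ≤ k n) (m : ℕ) : m ≤ s k m := by
  induction m with
  | zero => simp [s]
  | succ n ih => have := s_lt_succ hk (k := k) n; omega

lemma P_pos (hk : ∀ n, 2 ≤ k n) (m : ℕ) : 0 < P k m :=
  Finset.prod_pos fun i _ => by exact_mod_cast Nat.lt_of_lt_of_le Nat.zero_lt_two (hk i)

lemma P_succ (m : ℕ) : P k (m + 1) = P k m * k m := Finset.prod_range_succ _ _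

lemma P_mono (hk : ∀ n, 2 ≤ k n) : Monotone (P k) := by
  apply monotone_nat_of_le_succ
  intro m
  rw [P_succ]
  have h1 : (1 : ℝ) ≤ (k m : ℝ) := by exact_mod_cast Nat.one_le_of_lt (hk m)
  exact le_mul_of_one_le_right (P_pos hk m).le h1

lemma two_pow_le_P (hk : ∀ n, 2 ≤ k n) (m : ℕ) : (2 : ℝ) ^ m ≤ P k m := by
  calc (2 : ℝ) ^ m = ∏ _i ∈ Finset.range m, (2 : ℝ) := by
        rw [Finset.prod_const, Finset.card_range]
    _ ≤ P k m :=
        Finset.prod_le_prod (fun i _ => by norm_num) (fun i _ => by exact_mod_cast hk i)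

lemma exists_block (hk : ∀ n, 2 ≤ k n) (j : ℕ) : ∃ m, s k m ≤ j ∧ j < s k (m + 1) := by
  induction j with
  | zero =>
    refine ⟨0, ?_, ?_⟩
    · simp [s]
    · have := s_lt_succ hk (k := k) 0; simp [s] at this ⊢; omega
  | succ n ih =>
    obtain ⟨m, h1, h2⟩ := ih
    rcases lt_or_ge (n + 1) (s k (m + 1)) with h | h
    · exact ⟨m, by omega, h⟩
    · have heq : n + 1 = s k (m + 1) := by omega
      exact ⟨m + 1, heq.ge, heq ▸ (heq ▸ s_lt_succ hk (m + 1))⟩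

end Stmt7Aux

open Stmt7Aux

/-- If `a` is obtained by concatenating, for `m = 0, 1, 2, …`, a block of
`k_m − 1` entries each equal to `1/(k_0 ⋯ k_m)` (here 0-indexed: the paper's
`k_{m+1}` is `k m`), then `a ∈ K`: it is positive, nonincreasing, summable
with total sum `1`, and `a_j ≤ ∑_{i>j} a_i` for all `j`. -/
theorem stmt7 (k : ℕ → ℕ) (hk : ∀ n, 2 ≤ k n) (a : ℕ → ℝ)
    (ha : ∀ m j : ℕ, (∑ i ∈ Finset.range m, (k i - 1)) ≤ j →
      j < ∑ i ∈ Finset.range (m + 1), (k i - 1) →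
      a j = 1 / ∏ i ∈ Finset.range (m + 1), (k i : ℝ)) :
    a ∈ K ∧ (∑' j, a j) = 1 := by
  have haval : ∀ m j : ℕ, s k m ≤ j → j < s k (m + 1) → a j = 1 / P k (m + 1) :=
    fun m j h1 h2 => ha m j h1 h2
  -- positivity
  have hpos : ∀ n, 0 < a n := by
    intro n
    obtain ⟨m, h1, h2⟩ := exists_block hk n
    rw [haval m n h1 h2]
    exact one_div_pos.mpr (P_pos hk (m + 1))
  -- block-wise partial sums
  have Fsum : ∀ M, ∑ j ∈ Finset.range (s k M), a j = 1 - 1 / P k M := by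
    intro M
    induction M with
    | zero => simp [s, P]
    | succ M ih =>
      have hle : s k M ≤ s k (M + 1) := (s_lt_succ hk M).le
      rw [Finset.range_eq_Ico, ← Finset.sum_Ico_consecutive _ (Nat.zero_le _) hle,
        ← Finset.range_eq_Ico, ih]
      have hconst : ∑ j ∈ Finset.Ico (s k M) (s k (M + 1)), a j
          = ((k M - 1 : ℕ) : ℝ) * (1 / P k (M + 1)) := by
        have heq : ∑ j ∈ Finset.Ico (s k M) (s k (M + 1)), a j
            = ∑ _j ∈ Finset.Ico (s k M) (s k (M + 1)), 1 / P k (M + 1) :=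
          Finset.sum_congr rfl (fun j hj =>
            haval M j (Finset.mem_Ico.mp hj).1 (Finset.mem_Ico.mp hj).2)
        rw [heq, Finset.sum_const, Nat.card_Ico, s_succ, nsmul_eq_mul]
        congr 2
        omega
      rw [hconst, Nat.cast_sub (Nat.one_le_of_lt (hk M)), Nat.cast_one, P_succ]
      have hP : P k M ≠ 0 := (P_pos hk M).ne'
      have hkM : (k M : ℝ) ≠ 0 := by
        have := hk M; positivity
      field_simp
      ring
  -- summability
  have hbound : ∀ N, ∑ j ∈ Finset.range N, a j ≤ 1 := by
    intro N
    have h1 : ∑ j ∈ Finset.range N, a j ≤ ∑ j ∈ Finset.range (s k N), a j := by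
      apply Finset.sum_le_sum_of_subset_of_nonneg
      · exact Finset.range_subset_range.mpr (le_s hk N)
      · exact fun i _ _ => (hpos i).le
    have h2 : ∑ j ∈ Finset.range (s k N), a j ≤ 1 := by
      rw [Fsum N]
      have := one_div_pos.mpr (P_pos hk N)
      linarith
    linarith
  have hsummable : Summable a := summable_of_sum_range_le (fun n => (hpos n).le) hbound
  -- total sum is 1
  have hPinv : Filter.Tendsto (fun M => 1 / P k M) Filter.atTop (nhds 0) := by
    have hb : ∀ m, 1 / P k m ≤ (1 / 2 : ℝ) ^ m := by
      intro m
      calc 1 / P k m ≤ 1 / (2 : ℝ) ^ m :=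
            one_div_le_one_div_of_le (by positivity) (two_pow_le_P hk m)
        _ = (1 / 2 : ℝ) ^ m := by rw [div_pow, one_pow]
    exact squeeze_zero (fun m => (one_div_pos.mpr (P_pos hk m)).le) hb
      (tendsto_pow_atTop_nhds_zero_of_lt_one (by norm_num) (by norm_num))
  have htsum : (∑' j, a j) = 1 := by
    have h1 : Filter.Tendsto (fun M => ∑ j ∈ Finset.range (s k M), a j)
        Filter.atTop (nhds (∑' j, a j)) :=
      (hsummable.hasSum.tendsto_sum_nat).comp ((s_mono hk).tendsto_atTop)
    have h2 : Filter.Tendsto (fun M => ∑ j ∈ Finset.range (s k M), a j)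
        Filter.atTop (nhds 1) := by
      simp only [Fsum]
      have := (tendsto_const_nhds (x := (1:ℝ)) (f := Filter.atTop)).sub hPinv
      simpa using this
    exact tendsto_nhds_unique h1 h2
  -- antitone
  have hanti : Antitone a := by
    intro j j' hjj'
    obtain ⟨m, hm1, hm2⟩ := exists_block hk j
    obtain ⟨m', hm'1, hm'2⟩ := exists_block hk j'
    have hmm' : m ≤ m' := by
      by_contra h
      push_neg at h
      have : s k (m' + 1) ≤ s k m := (s_mono hk).monotone h
      omega
    rw [haval m j hm1 hm2, haval m' j' hm'1 hm'2]
    exact one_div_le_one_div_of_le (P_pos hk (m + 1))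
      ((P_mono hk) (by omega : m + 1 ≤ m' + 1))
  -- tail inequality
  have htail : ∀ n, a n ≤ ∑' i, a (n + 1 + i) := by
    intro n
    have hshift : ∑' i, a (n + 1 + i) = 1 - ∑ j ∈ Finset.range (n + 1), a j := by
      have h := Summable.sum_add_tsum_nat_add (n + 1) hsummable
      have hcongr : (∑' i, a (i + (n + 1))) = ∑' i, a (n + 1 + i) :=
        tsum_congr fun i => by rw [add_comm]
      rw [hcongr, htsum] at h
      linarith
    rw [hshift]
    obtain ⟨m, hm1, hm2⟩ := exists_block hk n
    have hsum : ∑ j ∈ Finset.range (n + 1), a j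
        = (1 - 1 / P k m) + ((n + 1 - s k m : ℕ) : ℝ) * (1 / P k (m + 1)) := by
      rw [Finset.range_eq_Ico, ← Finset.sum_Ico_consecutive _ (Nat.zero_le _)
        (by omega : s k m ≤ n + 1), ← Finset.range_eq_Ico, Fsum m]
      congr 1
      have heq : ∑ j ∈ Finset.Ico (s k m) (n + 1), a j
          = ∑ _j ∈ Finset.Ico (s k m) (n + 1), 1 / P k (m + 1) :=
        Finset.sum_congr rfl (fun j hj =>
          haval m j (Finset.mem_Ico.mp hj).1 (by
            have := (Finset.mem_Ico.mp hj).2; omega))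
      rw [heq, Finset.sum_const, Nat.card_Ico, nsmul_eq_mul]
    rw [hsum, haval m n hm1 hm2]
    have hcast : ((n + 1 - s k m : ℕ) : ℝ) = (n : ℝ) + 1 - (s k m : ℝ) := by
      have : s k m ≤ n + 1 := by omega
      push_cast [Nat.cast_sub this]
      ring
    have hnat : n + 2 ≤ s k m + k m := by
      have h2 := s_succ (k := k) m
      have := hk m
      omega
    have hPm := P_pos hk m
    have hPm1 := P_pos hk (m + 1)
    have hkM : (0:ℝ) < (k m : ℝ) := by exact_mod_cast Nat.lt_of_lt_of_le Nat.zero_lt_two (hk m)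
    have hkey : ((n : ℝ) + 1 - (s k m : ℝ) + 1) * (1 / P k (m + 1)) ≤ 1 / P k m := by
      have hcast2 : (n : ℝ) + 1 - (s k m : ℝ) + 1 ≤ (k m : ℝ) := by
        have : ((n : ℕ) : ℝ) + 2 ≤ ((s k m : ℕ) : ℝ) + (k m : ℝ) := by exact_mod_cast hnat
        linarith
      have hnn : (0:ℝ) ≤ (n : ℝ) + 1 - (s k m : ℝ) + 1 := by
        have : ((s k m : ℕ) : ℝ) ≤ (n : ℝ) := by exact_mod_cast hm1
        linarith
      calc ((n : ℝ) + 1 - (s k m : ℝ) + 1) * (1 / P k (m + 1))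
          ≤ (k m : ℝ) * (1 / P k (m + 1)) := by
            apply mul_le_mul_of_nonneg_right hcast2 (by positivity)
        _ = 1 / P k m := by
            rw [P_succ]
            field_simp
    rw [hcast]
    nlinarith [hkey]
  exact ⟨⟨hpos, hanti, hsummable, htsum.le, htail⟩, htsum⟩
end

section
/- Fix an integer m ≥ 2 and let K_m = { a ∈ K : a_1 = a_2 = … = a_{m−1} = 1/m }. Then K_m is a face of K: whenever b, c ∈ K, 0 < λ < 1, and λb + (1−λ)c ∈ K_m, one has b ∈ K_m and c ∈ K_m. -/
/-- `K_m`: elements of `K` whose first `m − 1` entries all equal `1/m`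
(0-indexed: entries `a_0, …, a_{m−2}`). -/
def Km (m : ℕ) : Set (ℕ → ℝ) :=
  {a | a ∈ K ∧ ∀ i, i + 1 < m → a i = 1 / (m : ℝ)}

lemma key_bound (a : ℕ → ℝ) (ha : a ∈ K) (n : ℕ) : ((n : ℝ) + 2) * a n ≤ 1 := by
  obtain ⟨hpos, hant, hsum, hle1, htail⟩ := ha
  have hsplit := Summable.sum_add_tsum_nat_add (n + 1) hsum
  have htail' : (∑' i, a (n + 1 + i)) = ∑' i, a (i + (n + 1)) := by
    congr 1; funext i; congr 1; omega
  have hlow : ((n : ℝ) + 1) * a n ≤ ∑ i ∈ Finset.range (n + 1), a i := by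
    have : ∑ i ∈ Finset.range (n + 1), a n ≤ ∑ i ∈ Finset.range (n + 1), a i :=
      Finset.sum_le_sum fun i hi => hant (Nat.lt_succ_iff.mp (Finset.mem_range.mp hi))
    simpa [Finset.sum_const, mul_comm] using this
  have h2 := htail n
  rw [htail'] at h2
  nlinarith [hpos n]

lemma face_le (lam x y t : ℝ) (h0 : 0 < lam) (h1 : lam < 1) (hx : x ≤ t) (hy : y ≤ t)
    (h : lam * x + (1 - lam) * y = t) : x = t ∧ y = t := by
  constructor <;> nlinarith

lemma face_ge (lam x y t : ℝ) (h0 : 0 < lam) (h1 : lam < 1) (hx : t ≤ x) (hy : t ≤ y)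
    (h : lam * x + (1 - lam) * y = t) : x = t ∧ y = t := by
  constructor <;> nlinarith

/-- `K_m` is a face of `K`: if `b, c ∈ K`, `0 < λ < 1` and
`λb + (1−λ)c ∈ Km m`, then `b ∈ Km m` and `c ∈ Km m`. -/
theorem stmt9 (m : ℕ) (hm : 2 ≤ m) (b c : ℕ → ℝ) (hb : b ∈ K) (hc : c ∈ K)
    (lam : ℝ) (h0 : 0 < lam) (h1 : lam < 1)
    (hmem : (fun n => lam * b n + (1 - lam) * c n) ∈ Km m) :
    b ∈ Km m ∧ c ∈ Km m := by
  obtain ⟨hdK, hdm⟩ := hmem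
  set n0 := m - 2 with hn0def
  have hn0 : n0 + 2 = m := by omega
  have hmpos : (0 : ℝ) < (m : ℝ) := by positivity
  have hcast : ((n0 : ℝ) + 2) = (m : ℝ) := by
    rw [← hn0]; push_cast; ring
  have hble : b n0 ≤ 1 / (m : ℝ) := by
    have := key_bound b hb n0
    rw [hcast] at this
    rw [le_div_iff₀ hmpos]; linarith [mul_comm (b n0) (m : ℝ) ▸ this]
  have hcle : c n0 ≤ 1 / (m : ℝ) := by
    have := key_bound c hc n0
    rw [hcast] at this
    rw [le_div_iff₀ hmpos]; linarith [mul_comm (c n0) (m : ℝ) ▸ this]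
  have hd0 : lam * b n0 + (1 - lam) * c n0 = 1 / (m : ℝ) := hdm n0 (by omega)
  obtain ⟨hbeq, hceq⟩ := face_le lam (b n0) (c n0) _ h0 h1 hble hcle hd0
  have hbi : ∀ i, i + 1 < m → b i = 1 / (m : ℝ) := by
    intro i hi
    have hge : 1 / (m : ℝ) ≤ b i := hbeq ▸ hb.2.1 (by omega : i ≤ n0)
    have hcge : 1 / (m : ℝ) ≤ c i := hceq ▸ hc.2.1 (by omega : i ≤ n0)
    exact (face_ge lam (b i) (c i) _ h0 h1 hge hcge (hdm i hi)).1
  have hci : ∀ i, i + 1 < m → c i = 1 / (m : ℝ) := by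
    intro i hi
    have hge : 1 / (m : ℝ) ≤ b i := hbeq ▸ hb.2.1 (by omega : i ≤ n0)
    have hcge : 1 / (m : ℝ) ≤ c i := hceq ▸ hc.2.1 (by omega : i ≤ n0)
    exact (face_ge lam (b i) (c i) _ h0 h1 hge hcge (hdm i hi)).2
  exact ⟨⟨hb, hbi⟩, ⟨hc, hci⟩⟩
end

section
/- Let m ≥ 2 be an integer and let a ∈ K satisfy a_1 = a_2 = … = a_{m−1} > a_m. If a is an extreme point of K, then a_1 = … = a_{m−1} = 1/m and the shifted-and-rescaled sequence (m a_m, m a_{m+1}, m a_{m+2}, …) is an extreme point of K. -/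
/-- `x` is an extreme point of `S`: `x ∈ S` and whenever
`x = λy + (1−λ)z` with `y, z ∈ S`, `0 < λ < 1`, one has `y = z = x`. -/
def IsExtremePt (S : Set (ℕ → ℝ)) (x : ℕ → ℝ) : Prop :=
  x ∈ S ∧ ∀ y ∈ S, ∀ z ∈ S, ∀ lam : ℝ, 0 < lam → lam < 1 →
    x = (fun n => lam * y n + (1 - lam) * z n) → y = x ∧ z = x

def Hseq (p : ℕ) (c : ℝ) (g : ℕ → ℝ) : ℕ → ℝ := fun n => if n < p then c else g (n - p)

lemma Hseq_summable {p : ℕ} {c : ℝ} {g : ℕ → ℝ} (hg : Summable g) :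
    Summable (Hseq p c g) := by
  refine (summable_nat_add_iff p).1 ?_
  have : (fun n => Hseq p c g (n + p)) = g := funext fun n => by simp [Hseq]
  rw [this]; exact hg

lemma Hseq_tail_le {p : ℕ} {c : ℝ} {g : ℕ → ℝ} (hg : Summable g) {s : ℕ} (hs : s ≤ p) :
    ∑' i, Hseq p c g (s + i) = ((p - s : ℕ) : ℝ) * c + ∑' n, g n := by
  have hsum : Summable (fun i => Hseq p c g (s + i)) := by
    have := (summable_nat_add_iff (f := Hseq p c g) s).2 (Hseq_summable hg)
    simpa [add_comm] using this
  rw [← Summable.sum_add_tsum_nat_add (p - s) hsum]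
  congr 1
  · rw [Finset.sum_congr rfl (fun i hi => show Hseq p c g (s + i) = c by
      simp [Hseq, show s + i < p by have := Finset.mem_range.1 hi; omega])]
    simp [Finset.sum_const, mul_comm]
  · exact tsum_congr fun i => by
      simp [Hseq, show ¬ (s + (i + (p - s)) < p) by omega,
        show s + (i + (p - s)) - p = i by omega]

lemma Hseq_tail_ge {p : ℕ} {c : ℝ} {g : ℕ → ℝ} {s : ℕ} (hs : p ≤ s) :
    ∑' i, Hseq p c g (s + i) = ∑' i, g (s - p + i) :=
  tsum_congr fun i => by
    simp [Hseq, show ¬ (s + i < p) by omega, show s + i - p = s - p + i by omega]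

lemma Hseq_sum {p : ℕ} {c : ℝ} {g : ℕ → ℝ} (hg : Summable g) :
    ∑' n, Hseq p c g n = (p : ℝ) * c + ∑' n, g n := by
  have h0 : ∑' n, Hseq p c g n = ∑' i, Hseq p c g (0 + i) := tsum_congr fun i => by simp
  rw [h0, Hseq_tail_le hg (Nat.zero_le p)]; simp

lemma Hseq_mem_K {p : ℕ} {c : ℝ} {g : ℕ → ℝ}
    (hc : 0 < c) (hgpos : ∀ n, 0 < g n) (hganti : Antitone g)
    (hg0 : g 0 ≤ c) (hsum : Summable g)
    (hle1 : (p : ℝ) * c + ∑' n, g n ≤ 1) (hcle : c ≤ ∑' n, g n)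
    (htail : ∀ n, g n ≤ ∑' i, g (n + 1 + i)) :
    Hseq p c g ∈ K := by
  refine ⟨?_, ?_, Hseq_summable hsum, ?_, ?_⟩
  · intro n
    by_cases h : n < p <;> simp [Hseq, h] <;> [exact hc; exact hgpos _]
  · intro n n' hnn'
    by_cases h' : n' < p
    · have h : n < p := lt_of_le_of_lt hnn' h'
      simp [Hseq, h, h']
    · by_cases h : n < p
      · simp only [Hseq, if_pos h, if_neg h']
        exact le_trans (hganti (Nat.zero_le _)) hg0
      · simp only [Hseq, if_neg h, if_neg h']
        exact hganti (by omega)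
  · rw [Hseq_sum hsum]; exact hle1
  · intro n
    by_cases h : n < p
    · rw [show Hseq p c g n = c from if_pos h, Hseq_tail_le hsum (show n + 1 ≤ p by omega)]
      have : (0:ℝ) ≤ ((p - (n+1) : ℕ) : ℝ) * c := by positivity
      linarith
    · push_neg at h
      rw [show Hseq p c g n = g (n - p) from if_neg (by omega),
        Hseq_tail_ge (by omega : p ≤ n + 1)]
      have he : ∑' i, g (n + 1 - p + i) = ∑' i, g (n - p + 1 + i) :=
        tsum_congr fun i => congrArg g (by omega)
      rw [he]; exact htail (n - p)

/-- Membership in `K` for the sequence whose first `p` entries are `c` and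
whose tail is `r` times the tail of `a`. -/
lemma FmemK {p : ℕ} {a : ℕ → ℝ} (hpos : ∀ n, 0 < a n) (hanti : Antitone a)
    (hsummable : Summable a) (htail : ∀ n, a n ≤ ∑' i, a (n + 1 + i))
    (c r : ℝ) (hc : 0 < c) (hr : 0 < r) (hg0 : r * a p ≤ c)
    (hle1 : (p : ℝ) * c + r * (∑' i, a (i + p)) ≤ 1)
    (hcle : c ≤ r * ∑' i, a (i + p)) :
    Hseq p c (fun j => r * a (j + p)) ∈ K := by
  have hTsum : Summable fun i => a (i + p) := (summable_nat_add_iff p).2 hsummable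
  have hts : ∑' j, r * a (j + p) = r * ∑' j, a (j + p) := tsum_mul_left
  refine Hseq_mem_K hc (fun n => mul_pos hr (hpos _))
    (fun i j hij => mul_le_mul_of_nonneg_left (hanti (by omega)) hr.le)
    (by simpa using hg0) (hTsum.mul_left r) ?_ ?_ ?_
  · rw [hts]; exact hle1
  · rw [hts]; exact hcle
  · intro n
    rw [show (∑' i, r * a (n + 1 + i + p)) = r * ∑' i, a (n + 1 + i + p) from tsum_mul_left]
    refine mul_le_mul_of_nonneg_left ?_ hr.le
    have h := htail (n + p)
    have e : ∑' i, a (n + p + 1 + i) = ∑' i, a (n + 1 + i + p) :=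
      tsum_congr fun i => congrArg a (by omega)
    rwa [e] at h

/-- A perturbation lemma: if both perturbed sequences are in `K`, extremality
of `a` forces a contradiction (since `ε > 0`). -/
lemma extreme_pert {p : ℕ} (hp : 1 ≤ p) {a : ℕ → ℝ} (hext : IsExtremePt K a)
    (heq' : ∀ i, i < p → a i = a 0) (ε r₁ r₂ : ℝ) (hε : 0 < ε) (hr : r₁ + r₂ = 2)
    (hy : Hseq p (a 0 + ε) (fun j => r₁ * a (j + p)) ∈ K)
    (hz : Hseq p (a 0 - ε) (fun j => r₂ * a (j + p)) ∈ K) : False := by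
  have hcomb : a = fun n => (1/2 : ℝ) * Hseq p (a 0 + ε) (fun j => r₁ * a (j + p)) n
      + (1 - 1/2) * Hseq p (a 0 - ε) (fun j => r₂ * a (j + p)) n := by
    funext n
    by_cases h : n < p
    · rw [show Hseq p (a 0 + ε) (fun j => r₁ * a (j + p)) n = a 0 + ε from if_pos h,
        show Hseq p (a 0 - ε) (fun j => r₂ * a (j + p)) n = a 0 - ε from if_pos h,
        heq' n h]
      ring
    · rw [show Hseq p (a 0 + ε) (fun j => r₁ * a (j + p)) n = r₁ * a (n - p + p) from
        if_neg h, show Hseq p (a 0 - ε) (fun j => r₂ * a (j + p)) n = r₂ * a (n - p + p)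
        from if_neg h, show n - p + p = n by omega]
      have h2 : r₂ = 2 - r₁ := by linarith
      rw [h2]; ring
  obtain ⟨hY, -⟩ := hext.2 _ hy _ hz (1/2) (by norm_num) (by norm_num) hcomb
  have h0 := congrFun hY 0
  rw [show Hseq p (a 0 + ε) (fun j => r₁ * a (j + p)) 0 = a 0 + ε from
    if_pos (show 0 < p from hp)] at h0
  linarith

set_option maxHeartbeats 1000000 in
/-- If `a ∈ K`, `a_1 = … = a_{m−1} > a_m` (0-indexed:
`a 0 = … = a (m−2) > a (m−1)`), and `a` is an extreme point of `K`, then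
`a_1 = … = a_{m−1} = 1/m` and `(m a_m, m a_{m+1}, …)` is an extreme point
of `K`. -/
theorem stmt11 (m : ℕ) (hm : 2 ≤ m) (a : ℕ → ℝ) (ha : a ∈ K)
    (heq : ∀ i, i + 1 < m → a i = a 0) (hlt : a (m - 1) < a (m - 2))
    (hext : IsExtremePt K a) :
    (∀ i, i + 1 < m → a i = 1 / (m : ℝ)) ∧
    IsExtremePt K (fun i => (m : ℝ) * a (i + (m - 1))) := by
  obtain ⟨hpos, hanti, hsummable, hsum1, htail⟩ := ha
  set p := m - 1 with hp
  have hp1 : 1 ≤ p := by omega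
  have hpm : p + 1 = m := by omega
  have heq' : ∀ i, i < p → a i = a 0 := fun i hi => heq i (by omega)
  set T := ∑' i, a (i + p) with hTdef
  clear_value T
  have hTsum : Summable fun i => a (i + p) := (summable_nat_add_iff p).2 hsummable
  have haT : a 0 ≤ T := by
    have h := htail (p - 1)
    have e1 : a (p - 1) = a 0 := heq' (p - 1) (by omega)
    have e2 : ∑' i, a (p - 1 + 1 + i) = ∑' i, a (i + p) :=
      tsum_congr fun i => congrArg a (by omega)
    rw [e1, e2, ← hTdef] at h; exact h
  have hT0 : 0 < T := lt_of_lt_of_le (hpos 0) haT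
  have hS : ∑' n, a n = (p : ℝ) * a 0 + T := by
    rw [hTdef, ← Summable.sum_add_tsum_nat_add p hsummable]
    congr 1
    rw [Finset.sum_congr rfl (fun i hi => heq' i (Finset.mem_range.1 hi))]
    simp [Finset.sum_const, mul_comm]
  have hap : a p < a 0 := by
    have h := hlt
    rwa [heq' (m - 2) (by omega)] at h
  have hap0 : 0 < a p := hpos p
  have hapT : a p ≤ T := le_trans hap.le haT
  -- Step 1 : T = a 0
  have hTa : T = a 0 := by
    by_contra hne
    have hlt' : a 0 < T := lt_of_le_of_ne haT (fun h => hne h.symm)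
    set ε := min ((T - a 0) / (p + 1)) (min (a 0 / 2) ((a 0 - a p) / (p + 1))) with hεdef
    have hε0 : 0 < ε :=
      lt_min (div_pos (by linarith) (by positivity))
        (lt_min (half_pos (hpos 0)) (div_pos (by linarith) (by positivity)))
    have k1 : (p + 1 : ℝ) * ε ≤ T - a 0 := by
      have h := min_le_left ((T - a 0) / (p + 1)) (min (a 0 / 2) ((a 0 - a p) / (p + 1)))
      rw [← hεdef] at h
      rw [mul_comm]
      exact (le_div_iff₀ (by positivity)).1 h
    have k2 : ε ≤ a 0 / 2 := le_trans (min_le_right _ _) (min_le_left _ _)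
    have k3 : (p + 1 : ℝ) * ε ≤ a 0 - a p := by
      have h : ε ≤ (a 0 - a p) / (p + 1) := by
        rw [hεdef]; exact le_trans (min_le_right _ _) (min_le_right _ _)
      rw [mul_comm]
      exact (le_div_iff₀ (by positivity)).1 h
    set δ := (p : ℝ) * ε / T with hδdef
    clear_value δ
    have hδ0 : 0 ≤ δ := by
      rw [hδdef]
      exact div_nonneg (mul_nonneg (Nat.cast_nonneg p) hε0.le) hT0.le
    have hδT : δ * T = (p : ℝ) * ε := by
      rw [hδdef]; exact div_mul_cancel₀ _ (ne_of_gt hT0)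
    have hδ1 : δ < 1 := by
      rw [hδdef, div_lt_one hT0]
      nlinarith
    refine extreme_pert hp1 hext heq' ε (1 - δ) (1 + δ) hε0 (by ring) ?_ ?_
    · refine FmemK hpos hanti hsummable htail _ _ (by linarith) (by linarith) ?_ ?_ ?_
      · nlinarith
      · rw [← hTdef]; nlinarith
      · rw [← hTdef]; nlinarith
    · refine FmemK hpos hanti hsummable htail _ _ (by linarith) (by linarith) ?_ ?_ ?_
      · nlinarith [mul_le_mul_of_nonneg_left hapT hδ0]
      · rw [← hTdef]; nlinarith
      · rw [← hTdef]; nlinarith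
  -- Step 2 : total sum is 1
  have hSum1 : ∑' n, a n = 1 := by
    by_contra hne
    have hlt' : ∑' n, a n < 1 := lt_of_le_of_ne hsum1 hne
    set S := ∑' n, a n with hSdef
    clear_value S
    set ε := min ((1 - S) / (p + 1)) (min (a 0 / 2) (a 0 - a p)) with hεdef
    have hε0 : 0 < ε :=
      lt_min (div_pos (by linarith) (by positivity))
        (lt_min (half_pos (hpos 0)) (by linarith))
    have k1 : (p + 1 : ℝ) * ε ≤ 1 - S := by
      have h := min_le_left ((1 - S) / (p + 1)) (min (a 0 / 2) (a 0 - a p))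
      rw [← hεdef] at h
      rw [mul_comm]
      exact (le_div_iff₀ (by positivity)).1 h
    have k2 : ε ≤ a 0 / 2 := le_trans (min_le_right _ _) (min_le_left _ _)
    have k3 : ε ≤ a 0 - a p := le_trans (min_le_right _ _) (min_le_right _ _)
    set δ := ε / T with hδdef
    clear_value δ
    have hδ0 : 0 ≤ δ := by
      rw [hδdef]
      exact div_nonneg hε0.le hT0.le
    have hδT : δ * T = ε := by
      rw [hδdef]; exact div_mul_cancel₀ _ (ne_of_gt hT0)
    have hδ1 : δ < 1 := by
      rw [hδdef, div_lt_one hT0]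
      linarith
    refine extreme_pert hp1 hext heq' ε (1 + δ) (1 - δ) hε0 (by ring) ?_ ?_
    · refine FmemK hpos hanti hsummable htail _ _ (by linarith) (by linarith) ?_ ?_ ?_
      · nlinarith [mul_le_mul_of_nonneg_left hapT hδ0]
      · rw [← hTdef]; nlinarith
      · rw [← hTdef]; nlinarith
    · refine FmemK hpos hanti hsummable htail _ _ (by linarith) (by linarith) ?_ ?_ ?_
      · nlinarith
      · rw [← hTdef]; nlinarith
      · rw [← hTdef]; nlinarith
  have hmpos : (0:ℝ) < m := by
    have : 0 < m := by omega
    exact_mod_cast this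
  have hm0 : (m : ℝ) ≠ 0 := ne_of_gt hmpos
  have ha0 : a 0 = 1 / m := by
    have hpm' : ((p : ℝ) + 1) = (m : ℝ) := by
      rw [← hpm]; push_cast; ring
    have h1 : (m : ℝ) * a 0 = 1 := by
      rw [← hpm']; rw [hS, hTa] at hSum1; linarith
    field_simp
    linarith
  have hma : (m : ℝ) * a 0 = 1 := by rw [ha0]; field_simp
  have htail' : ∀ n : ℕ, a (n + p) ≤ ∑' i, a (n + 1 + i + p) := by
    intro n
    have h := htail (n + p)
    have e : ∑' i, a (n + p + 1 + i) = ∑' i, a (n + 1 + i + p) :=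
      tsum_congr fun i => congrArg a (by omega)
    rwa [e] at h
  refine ⟨fun i hi => (heq i hi).trans ha0, ?_, ?_⟩
  · -- b ∈ K
    refine ⟨fun n => mul_pos hmpos (hpos _), fun i j hij =>
      mul_le_mul_of_nonneg_left (hanti (by omega)) hmpos.le, hTsum.mul_left _, ?_, ?_⟩
    · rw [show (∑' i, (m:ℝ) * a (i + p)) = (m:ℝ) * ∑' i, a (i + p) from tsum_mul_left,
        ← hTdef, hTa, hma]
    · intro n
      rw [show (∑' i, (m:ℝ) * a (n + 1 + i + p)) = (m:ℝ) * ∑' i, a (n + 1 + i + p) from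
        tsum_mul_left]
      exact mul_le_mul_of_nonneg_left (htail' n) hmpos.le
  · -- extremality of b
    intro y hy z hz lam hl0 hl1 hb
    obtain ⟨hypos, hyanti, hysum, hysum1, hytail⟩ := hy
    obtain ⟨hzpos, hzanti, hzsum, hzsum1, hztail⟩ := hz
    have hm1 : (0:ℝ) < 1 / m := one_div_pos.mpr hmpos
    have hbsum : (1:ℝ) = lam * ∑' n, y n + (1 - lam) * ∑' n, z n := by
      have h1 : ∑' i, (m : ℝ) * a (i + p) = 1 := by
        rw [show (∑' i, (m:ℝ) * a (i + p)) = (m:ℝ) * ∑' i, a (i + p) from tsum_mul_left,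
          ← hTdef, hTa, hma]
      have h2 : ∑' i, (m : ℝ) * a (i + p) = ∑' n, (lam * y n + (1 - lam) * z n) :=
        tsum_congr fun n => congrFun hb n
      rw [Summable.tsum_add (hysum.mul_left lam) (hzsum.mul_left (1 - lam))] at h2
      have e1 : ∑' n, lam * y n = lam * ∑' n, y n := tsum_mul_left
      have e2 : ∑' n, (1 - lam) * z n = (1 - lam) * ∑' n, z n := tsum_mul_left
      linarith [h1, h2, e1, e2]
    have hys1 : ∑' n, y n = 1 := by nlinarith
    have hzs1 : ∑' n, z n = 1 := by nlinarith
    have hy01 : y 0 ≤ 1 := by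
      rw [← hys1]; exact Summable.le_tsum hysum 0 fun j _ => (hypos j).le
    have hz01 : z 0 ≤ 1 := by
      rw [← hzs1]; exact Summable.le_tsum hzsum 0 fun j _ => (hzpos j).le
    have hpm' : ((p : ℝ) + 1) = (m : ℝ) := by rw [← hpm]; push_cast; ring
    have memY : Hseq p (1 / m) (fun j => (1 / m) * y j) ∈ K := by
      refine Hseq_mem_K hm1 (fun n => mul_pos hm1 (hypos n))
        (fun i j hij => mul_le_mul_of_nonneg_left (hyanti hij) hm1.le)
        (by simpa using mul_le_of_le_one_right hm1.le hy01)
        (hysum.mul_left _) ?_ ?_ ?_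
      · rw [show (∑' n, (1/(m:ℝ)) * y n) = (1/(m:ℝ)) * ∑' n, y n from tsum_mul_left, hys1]
        rw [show ((p:ℝ) * (1/m) + 1/m * 1) = ((p:ℝ)+1) * (1/m) by ring, hpm']
        rw [mul_one_div, div_self hm0]
      · rw [show (∑' n, (1/(m:ℝ)) * y n) = (1/(m:ℝ)) * ∑' n, y n from tsum_mul_left, hys1,
          mul_one]
      · intro n
        rw [show (∑' i, (1/(m:ℝ)) * y (n + 1 + i)) = (1/(m:ℝ)) * ∑' i, y (n + 1 + i) from
          tsum_mul_left]
        exact mul_le_mul_of_nonneg_left (hytail n) hm1.le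
    have memZ : Hseq p (1 / m) (fun j => (1 / m) * z j) ∈ K := by
      refine Hseq_mem_K hm1 (fun n => mul_pos hm1 (hzpos n))
        (fun i j hij => mul_le_mul_of_nonneg_left (hzanti hij) hm1.le)
        (by simpa using mul_le_of_le_one_right hm1.le hz01)
        (hzsum.mul_left _) ?_ ?_ ?_
      · rw [show (∑' n, (1/(m:ℝ)) * z n) = (1/(m:ℝ)) * ∑' n, z n from tsum_mul_left, hzs1]
        rw [show ((p:ℝ) * (1/m) + 1/m * 1) = ((p:ℝ)+1) * (1/m) by ring, hpm']
        rw [mul_one_div, div_self hm0]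
      · rw [show (∑' n, (1/(m:ℝ)) * z n) = (1/(m:ℝ)) * ∑' n, z n from tsum_mul_left, hzs1,
          mul_one]
      · intro n
        rw [show (∑' i, (1/(m:ℝ)) * z (n + 1 + i)) = (1/(m:ℝ)) * ∑' i, z (n + 1 + i) from
          tsum_mul_left]
        exact mul_le_mul_of_nonneg_left (hztail n) hm1.le
    have hcomb : a = fun n => lam * Hseq p (1 / m) (fun j => (1 / m) * y j) n
        + (1 - lam) * Hseq p (1 / m) (fun j => (1 / m) * z j) n := by
      funext n
      by_cases h : n < p
      · rw [show Hseq p (1/(m:ℝ)) (fun j => (1/m) * y j) n = 1/m from if_pos h,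
          show Hseq p (1/(m:ℝ)) (fun j => (1/m) * z j) n = 1/m from if_pos h,
          heq' n h, ha0]
        ring
      · rw [show Hseq p (1/(m:ℝ)) (fun j => (1/m) * y j) n = (1/m) * y (n - p) from
          if_neg h, show Hseq p (1/(m:ℝ)) (fun j => (1/m) * z j) n = (1/m) * z (n - p)
          from if_neg h]
        have hbn := congrFun hb (n - p)
        rw [show n - p + p = n by omega] at hbn
        have h2 : a n = (1/(m:ℝ)) * ((m:ℝ) * a n) := by
          field_simp
        rw [h2, hbn]; ring
    obtain ⟨hY, hZ⟩ := hext.2 _ memY _ memZ lam hl0 hl1 hcomb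
    constructor
    · funext i
      have h := congrFun hY (i + p)
      rw [show Hseq p (1/(m:ℝ)) (fun j => (1/m) * y j) (i + p) = (1/m) * y (i + p - p)
        from if_neg (by omega), Nat.add_sub_cancel] at h
      show y i = (m:ℝ) * a (i + p)
      field_simp at h
      linarith
    · funext i
      have h := congrFun hZ (i + p)
      rw [show Hseq p (1/(m:ℝ)) (fun j => (1/m) * z j) (i + p) = (1/m) * z (i + p - p)
        from if_neg (by omega), Nat.add_sub_cancel] at h
      show z i = (m:ℝ) * a (i + p)
      field_simp at h
      linarith
end

section
/- Let m ≥ 2 be an integer and let a ∈ K satisfy a_1 = a_2 = … = a_{m−1} > a_m. If a_1 = … = a_{m−1} = 1/m and the shifted-and-rescaled sequence (m a_m, m a_{m+1}, m a_{m+2}, …) is an extreme point of K, then a is an extreme point of K. -/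
private lemma cvx_eq {u v c lam : ℝ} (hu : u ≤ c) (hv : v ≤ c)
    (hl0 : 0 < lam) (hl1 : lam < 1) (h : lam * u + (1 - lam) * v = c) :
    u = c ∧ v = c := by
  have h2 : (1 - lam) * v ≤ (1 - lam) * c := mul_le_mul_of_nonneg_left hv (by linarith)
  have hu' : u = c := by
    by_contra hne
    have : lam * u < lam * c := (mul_lt_mul_iff_right₀ hl0).2 (lt_of_le_of_ne hu hne)
    nlinarith
  refine ⟨hu', ?_⟩
  have : (1 - lam) * v = (1 - lam) * c := by rw [hu'] at h; nlinarith
  exact mul_left_cancel₀ (by linarith : (1:ℝ) - lam ≠ 0) this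

set_option maxHeartbeats 1000000 in
/-- If `a ∈ K`, `a_1 = … = a_{m−1} > a_m` (0-indexed:
`a 0 = … = a (m−2) > a (m−1)`), the common value is `1/m`, and
`(m a_m, m a_{m+1}, …)` is an extreme point of `K`, then `a` is an extreme
point of `K`. -/
theorem stmt12 (m : ℕ) (hm : 2 ≤ m) (a : ℕ → ℝ) (ha : a ∈ K)
    (heq : ∀ i, i + 1 < m → a i = 1 / (m : ℝ)) (hlt : a (m - 1) < a (m - 2))
    (hext : IsExtremePt K (fun i => (m : ℝ) * a (i + (m - 1)))) :
    IsExtremePt K a := by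
  obtain ⟨hapos, hamono, hasum, hale, hatail⟩ := ha
  have hm0 : (0:ℝ) < (m:ℝ) := by exact_mod_cast (by omega : 0 < m)
  have hc : (m:ℝ) * (1 / (m:ℝ)) = 1 := by field_simp
  set M := m - 1 with hMdef
  have hMm : (M:ℝ) = (m:ℝ) - 1 := by
    have h1 : ((m - 1 : ℕ):ℝ) = (m:ℝ) - 1 := by
      have := Nat.cast_sub (by omega : 1 ≤ m) (R := ℝ)
      simpa using this
    simpa [hMdef] using h1
  refine ⟨⟨hapos, hamono, hasum, hale, hatail⟩, ?_⟩
  intro y hy z hz lam hl0 hl1 hcomb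
  obtain ⟨hypos, hymono, hysum, hyle, hytail⟩ := hy
  obtain ⟨hzpos, hzmono, hzsum, hzle, hztail⟩ := hz
  set Ta := ∑' i, a (i + M) with hTadef
  set Ty := ∑' i, y (i + M) with hTydef
  set Tz := ∑' i, z (i + M) with hTzdef
  clear_value M Ta Ty Tz
  -- tail constraint at M-1 for each of a, y, z
  have tail_eq : ∀ f : ℕ → ℝ, ∑' i, f (M - 1 + 1 + i) = ∑' i, f (i + M) :=
    fun f => tsum_congr fun i => congrArg f (by omega)
  have hta : a (M - 1) ≤ Ta := by rw [hTadef]; have := hatail (M - 1); rwa [tail_eq a] at this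
  have hty : y (M - 1) ≤ Ty := by rw [hTydef]; have := hytail (M - 1); rwa [tail_eq y] at this
  have htz : z (M - 1) ≤ Tz := by rw [hTzdef]; have := hztail (M - 1); rwa [tail_eq z] at this
  have haM : a (M - 1) = 1 / m := heq (M - 1) (by omega)
  -- splitting of sums
  have splita : ∑ i ∈ Finset.range M, a i + Ta = ∑' i, a i := by rw [hTadef]; exact Summable.sum_add_tsum_nat_add M hasum
  have splity : ∑ i ∈ Finset.range M, y i + Ty = ∑' i, y i := by rw [hTydef]; exact Summable.sum_add_tsum_nat_add M hysum
  have splitz : ∑ i ∈ Finset.range M, z i + Tz = ∑' i, z i := by rw [hTzdef]; exact Summable.sum_add_tsum_nat_add M hzsum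
  have hsumMa : ∑ i ∈ Finset.range M, a i = (M:ℝ) * (1 / m) := by
    rw [Finset.sum_congr rfl (fun i hi => heq i (by have := Finset.mem_range.1 hi; omega))]
    simp [Finset.sum_const, Finset.card_range]
  -- Ta = 1/m and total sum of a is 1
  have hTa : Ta = 1 / m := by nlinarith [hta, hale, splita, hsumMa, hMm, haM]
  have hSa : ∑' i, a i = 1 := by nlinarith [splita, hsumMa, hMm, hTa]
  -- sums of y and z are 1
  have hS_comb : ∑' n, a n = lam * ∑' n, y n + (1 - lam) * ∑' n, z n := by
    rw [hcomb, Summable.tsum_add (hysum.mul_left lam) (hzsum.mul_left (1 - lam)),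
      tsum_mul_left, tsum_mul_left]
  obtain ⟨hSy, hSz⟩ := cvx_eq hyle hzle hl0 hl1 (hS_comb.symm.trans hSa)
  -- tails combine
  have hT_comb : Ta = lam * Ty + (1 - lam) * Tz := by
    rw [hTadef, hTydef, hTzdef]
    rw [tsum_congr (fun i => congrFun hcomb (i + M)),
      Summable.tsum_add (((summable_nat_add_iff M).2 hysum).mul_left lam)
        (((summable_nat_add_iff M).2 hzsum).mul_left (1 - lam)),
      tsum_mul_left, tsum_mul_left]
  -- gap is zero: Ty = y (M-1), Tz = z (M-1)
  have hcombM : a (M - 1) = lam * y (M - 1) + (1 - lam) * z (M - 1) := by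
    exact congrFun hcomb (M - 1)
  have e1 : lam * (Ty - y (M - 1)) = 0 := by
    have h2 := mul_nonneg (by linarith : (0:ℝ) ≤ 1 - lam) (sub_nonneg.2 htz)
    have h3 := mul_nonneg hl0.le (sub_nonneg.2 hty)
    linarith [hT_comb, hcombM, haM, hTa, h2, h3]
  have e2 : (1 - lam) * (Tz - z (M - 1)) = 0 := by
    have h3 := mul_nonneg hl0.le (sub_nonneg.2 hty)
    have h2 := mul_nonneg (by linarith : (0:ℝ) ≤ 1 - lam) (sub_nonneg.2 htz)
    linarith [hT_comb, hcombM, haM, hTa, h2, h3]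
  have hTy : Ty = y (M - 1) := by
    rcases mul_eq_zero.1 e1 with h | h
    · exact absurd h (ne_of_gt hl0)
    · linarith
  have hTz : Tz = z (M - 1) := by
    rcases mul_eq_zero.1 e2 with h | h
    · exact absurd h (ne_of_gt (by linarith))
    · linarith
  -- y (M-1) ≤ 1/m and z (M-1) ≤ 1/m
  have bdd : ∀ w : ℕ → ℝ, Antitone w → (∑ i ∈ Finset.range M, w i + ∑' i, w (i + M) = 1) →
      (∑' i, w (i + M) = w (M - 1)) → w (M - 1) ≤ 1 / m := by
    intro w hmono hsum hT
    have hbd : ∑ i ∈ Finset.range M, w (M - 1) ≤ ∑ i ∈ Finset.range M, w i :=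
      Finset.sum_le_sum (fun i hi => hmono (by have := Finset.mem_range.1 hi; omega))
    rw [Finset.sum_const, Finset.card_range, nsmul_eq_mul] at hbd
    have hMu : (M:ℝ) * w (M - 1) = (m:ℝ) * w (M - 1) - w (M - 1) := by rw [hMm]; ring
    rw [le_div_iff₀ hm0]
    linarith [hbd, hsum, hT, hMu]
  have hybd : y (M - 1) ≤ 1 / m := bdd y hymono (by rw [← hTydef, splity, hSy]) (by rw [← hTydef]; exact hTy)
  have hzbd : z (M - 1) ≤ 1 / m := bdd z hzmono (by rw [← hTzdef, splitz, hSz]) (by rw [← hTzdef]; exact hTz)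
  obtain ⟨hyM, hzM⟩ := cvx_eq hybd hzbd hl0 hl1 (by rw [← hcombM, haM])
  -- flatness: w i = 1/m for i < M
  have flat : ∀ w : ℕ → ℝ, Antitone w → (∑ i ∈ Finset.range M, w i + ∑' i, w (i + M) = 1) →
      (∑' i, w (i + M) = w (M - 1)) → w (M - 1) = 1 / m → ∀ i < M, w i = 1 / m := by
    intro w hmono hsum hT hval i hi
    have key : ∑ j ∈ Finset.range M, (w j - 1 / m) = 0 := by
      rw [Finset.sum_sub_distrib, Finset.sum_const, Finset.card_range, nsmul_eq_mul]
      nlinarith [hsum, hT, hval, hMm]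
    have h0 := (Finset.sum_eq_zero_iff_of_nonneg (fun j hj => by
      have hj' := Finset.mem_range.1 hj
      have := hmono (show j ≤ M - 1 by omega)
      simp only [sub_nonneg]
      linarith [hval])).1 key i (Finset.mem_range.2 hi)
    linarith [h0]
  have hflaty := flat y hymono (by rw [← hTydef, splity, hSy]) (by rw [← hTydef]; exact hTy) hyM
  have hflatz := flat z hzmono (by rw [← hTzdef, splitz, hSz]) (by rw [← hTzdef]; exact hTz) hzM
  -- shifted rescaled sequences are in K
  have memK : ∀ w : ℕ → ℝ, (∀ n, 0 < w n) → Antitone w → Summable w →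
      (∀ n, w n ≤ ∑' i, w (n + 1 + i)) → (∑' i, w (i + M) = 1 / m) →
      (fun i => (m:ℝ) * w (i + M)) ∈ K := by
    intro w hpos hmono hsum htail hT
    refine ⟨fun i => mul_pos hm0 (hpos _),
      fun i j hij => mul_le_mul_of_nonneg_left (hmono (by omega)) hm0.le,
      ((summable_nat_add_iff M).2 hsum).mul_left _, ?_, ?_⟩
    · rw [tsum_mul_left, hT, hc]
    · intro n
      have h1 : w (n + M) ≤ ∑' i, w (n + M + 1 + i) := htail (n + M)
      have h2 : ∑' i, w (n + M + 1 + i) = ∑' i, w (n + 1 + i + M) :=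
        tsum_congr fun i => congrArg w (by omega)
      calc (m:ℝ) * w (n + M) ≤ (m:ℝ) * ∑' i, w (n + 1 + i + M) := by
            rw [← h2]; exact mul_le_mul_of_nonneg_left h1 hm0.le
        _ = ∑' i, (m:ℝ) * w (n + 1 + i + M) := (tsum_mul_left).symm
  have hy' := memK y hypos hymono hysum hytail (by rw [← hTydef, hTy, hyM])
  have hz' := memK z hzpos hzmono hzsum hztail (by rw [← hTzdef, hTz, hzM])
  have hcomb' : (fun i => (m:ℝ) * a (i + M)) =
      fun n => lam * ((m:ℝ) * y (n + M)) + (1 - lam) * ((m:ℝ) * z (n + M)) := by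
    funext i
    have h := congrFun hcomb (i + M)
    try dsimp only at h ⊢
    rw [h]; ring
  obtain ⟨hy'e, hz'e⟩ := hext.2 _ hy' _ hz' lam hl0 hl1 hcomb'
  have final : ∀ w : ℕ → ℝ, (∀ i < M, w i = 1 / m) →
      ((fun i => (m:ℝ) * w (i + M)) = fun i => (m:ℝ) * a (i + M)) → w = a := by
    intro w hflat hwe
    funext n
    by_cases hn : n < M
    · rw [hflat n hn, heq n (by omega)]
    · have h := congrFun hwe (n - M)
      try dsimp only at h
      rw [show n - M + M = n by omega] at h
      exact mul_left_cancel₀ (ne_of_gt hm0) h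
  exact ⟨final y hflaty hy'e, final z hflatz hz'e⟩
end

section
/- Let (k_n)_{n≥1} be a sequence of integers with k_n ≥ 2 for all n, and let a be the sequence obtained by concatenating, for n = 1, 2, 3, …, a block of k_n − 1 consecutive entries each equal to 1/(k_1 k_2 ⋯ k_n). Then a is an extreme point of K. -/
namespace Stmt13aux

open Filter Finset

variable (k : ℕ → ℕ)

def S (m : ℕ) : ℕ := ∑ i ∈ Finset.range m, (k i - 1)

noncomputable def Q (m : ℕ) : ℝ := ∏ i ∈ Finset.range m, (k i : ℝ)

lemma S_succ (m : ℕ) : S k (m + 1) = S k m + (k m - 1) := Finset.sum_range_succ _ _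

lemma Q_succ (m : ℕ) : Q k (m + 1) = Q k m * k m := Finset.prod_range_succ _ _

variable (hk : ∀ n, 2 ≤ k n)
include hk

lemma S_strictMono : StrictMono (S k) := by
  apply strictMono_nat_of_lt_succ
  intro m
  have := hk m
  rw [S_succ]; omega

lemma le_S : ∀ m, m ≤ S k m := by
  intro m
  induction m with
  | zero => simp [S]
  | succ n ih => have := hk n; rw [S_succ]; omega

lemma Q_pos (m : ℕ) : 0 < Q k m := by
  apply Finset.prod_pos
  intro i _
  have := hk i
  positivity

lemma two_pow_le_Q (m : ℕ) : (2 : ℝ) ^ m ≤ Q k m := by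
  calc (2:ℝ)^m = ∏ i ∈ Finset.range m, (2:ℝ) := by
        rw [Finset.prod_const, Finset.card_range]
    _ ≤ Q k m := by
        apply Finset.prod_le_prod (fun i _ => by norm_num)
        intro i _
        exact_mod_cast hk i

lemma Q_mono : Monotone (Q k) := by
  apply monotone_nat_of_le_succ
  intro m
  rw [Q_succ]
  have h1 : (0:ℝ) < Q k m := Q_pos k hk m
  have h2 : (2:ℝ) ≤ k m := by exact_mod_cast hk m
  nlinarith

def blk (j : ℕ) : ℕ :=
  Nat.find (⟨j, lt_of_lt_of_le j.lt_succ_self (le_S k hk (j + 1))⟩ : ∃ m, j < S k (m + 1))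

lemma blk_lt (j : ℕ) : j < S k (blk k hk j + 1) :=
  Nat.find_spec (⟨j, lt_of_lt_of_le j.lt_succ_self (le_S k hk (j + 1))⟩ : ∃ m, j < S k (m + 1))

lemma S_blk_le (j : ℕ) : S k (blk k hk j) ≤ j := by
  rcases h : blk k hk j with _ | m
  · simp [S]
  · have := Nat.find_min (⟨j, lt_of_lt_of_le j.lt_succ_self (le_S k hk (j + 1))⟩ :
      ∃ m, j < S k (m + 1)) (show m < blk k hk j by omega)
    omega

lemma blk_ge {m j : ℕ} (h : S k m ≤ j) : m ≤ blk k hk j := by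
  by_contra hc
  push_neg at hc
  have : S k m < S k (blk k hk j + 1) := lt_of_le_of_lt h (blk_lt k hk j)
  have := (S_strictMono k hk).lt_iff_lt.mp this
  omega

lemma blk_eq {m j : ℕ} (h1 : S k m ≤ j) (h2 : j < S k (m + 1)) : blk k hk j = m :=
  le_antisymm (Nat.find_le h2) (blk_ge k hk h1)

lemma blk_mono : Monotone (blk k hk) := fun i j hij =>
  blk_ge k hk (le_trans (S_blk_le k hk i) hij)

lemma blk_succ_cases (j : ℕ) :
    blk k hk (j + 1) = blk k hk j ∨ blk k hk (j + 1) = blk k hk j + 1 := by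
  have h1 : blk k hk j ≤ blk k hk (j + 1) := blk_mono k hk (Nat.le_succ j)
  have h2 : blk k hk (j + 1) ≤ blk k hk j + 1 := by
    apply Nat.find_le
    calc j + 1 ≤ S k (blk k hk j + 1) := blk_lt k hk j
      _ < S k (blk k hk j + 1 + 1) := S_strictMono k hk (Nat.lt_succ_self _)
  omega


noncomputable def r (j : ℕ) : ℝ :=
  ((k (blk k hk j) : ℝ) - ((j - S k (blk k hk j) : ℕ) : ℝ)) / Q k (blk k hk j + 1)

lemma t_le (j : ℕ) : j - S k (blk k hk j) ≤ k (blk k hk j) - 2 := by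
  have h1 := blk_lt k hk j
  have h2 := S_blk_le k hk j
  rw [S_succ] at h1
  have := hk (blk k hk j)
  omega

lemma r_ge (j : ℕ) : 2 / Q k (blk k hk j + 1) ≤ r k hk j := by
  have ht := t_le k hk j
  have hkk := hk (blk k hk j)
  have hnum : (2:ℝ) ≤ (k (blk k hk j) : ℝ) - ((j - S k (blk k hk j) : ℕ) : ℝ) := by
    have : ((j - S k (blk k hk j) : ℕ) : ℝ) ≤ ((k (blk k hk j) - 2 : ℕ) : ℝ) := by
      exact_mod_cast ht
    have h2 : ((k (blk k hk j) - 2 : ℕ) : ℝ) = (k (blk k hk j) : ℝ) - 2 := by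
      push_cast [hkk]; ring
    linarith [h2 ▸ this]
  unfold r
  have hq := Q_pos k hk (blk k hk j + 1)
  gcongr

lemma r_pos (j : ℕ) : 0 < r k hk j := by
  have := r_ge k hk j
  have := Q_pos k hk (blk k hk j + 1)
  have h2 : 0 < 2 / Q k (blk k hk j + 1) := by positivity
  linarith

lemma r_le (j : ℕ) : r k hk j ≤ 1 / Q k (blk k hk j) := by
  set m := blk k hk j with hm
  have hq1 : 0 < Q k (m + 1) := Q_pos k hk _
  have hq0 : 0 < Q k m := Q_pos k hk _
  have hkk : (0:ℝ) < k m := by have := hk m; positivity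
  have hnum : (k m : ℝ) - ((j - S k m : ℕ) : ℝ) ≤ (k m : ℝ) := by
    have : (0:ℝ) ≤ ((j - S k m : ℕ) : ℝ) := Nat.cast_nonneg _
    linarith
  calc r k hk j ≤ (k m : ℝ) / Q k (m + 1) := by
        unfold r
        gcongr
    _ = 1 / Q k m := by
        rw [Q_succ]
        field_simp

lemma telescope (j : ℕ) : r k hk j - r k hk (j + 1) = 1 / Q k (blk k hk j + 1) := by
  set m := blk k hk j with hm
  have hSle : S k m ≤ j := S_blk_le k hk j
  have hSlt : j < S k (m + 1) := blk_lt k hk j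
  have hkm : 2 ≤ k m := hk m
  rcases blk_succ_cases k hk j with h | h
  · -- same block
    have hcast : ((j + 1 - S k m : ℕ) : ℝ) = ((j - S k m : ℕ) : ℝ) + 1 := by
      have : j + 1 - S k m = (j - S k m) + 1 := by omega
      rw [this]; push_cast; ring
    unfold r
    rw [h, ← hm, hcast, div_sub_div_same]
    congr 1
    ring
  · -- next block: j + 1 = S k (m+1)
    have hj1 : j + 1 = S k (m + 1) := by
      have h1 : S k (m + 1) ≤ j + 1 := by
        have := S_blk_le k hk (j + 1)
        rw [h, ← hm] at this
        exact this
      omega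
    have ht : j - S k m = k m - 2 := by
      rw [S_succ] at hj1
      omega
    have ht2 : ((k m - 2 : ℕ) : ℝ) = (k m : ℝ) - 2 := by
      push_cast [hkm]; ring
    have hr1 : r k hk j = 2 / Q k (m + 1) := by
      unfold r
      rw [← hm, ht, ht2]
      congr 1
      ring
    have hr2 : r k hk (j + 1) = 1 / Q k (m + 1) := by
      unfold r
      rw [h, ← hm]
      have hz : j + 1 - S k (m + 1) = 0 := by omega
      rw [hz]
      rw [Q_succ k (m+1)]
      have hkm1 : (0:ℝ) < k (m + 1) := by have := hk (m+1); positivity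
      have hq : (0:ℝ) < Q k (m + 1) := Q_pos k hk _
      push_cast
      field_simp
      ring
    rw [hr1, hr2]
    rw [div_sub_div_same]
    norm_num

lemma blk_tendsto : Tendsto (blk k hk) atTop atTop :=
  tendsto_atTop_atTop.2 fun M => ⟨S k M, fun j hj => blk_ge k hk hj⟩

lemma r_tendsto : Tendsto (r k hk) atTop (nhds 0) := by
  apply squeeze_zero (fun j => (r_pos k hk j).le)
    (g := fun j => (1/2 : ℝ) ^ (blk k hk j))
  · intro j
    calc r k hk j ≤ 1 / Q k (blk k hk j) := r_le k hk j
      _ ≤ 1 / (2:ℝ) ^ (blk k hk j) := by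
          apply one_div_le_one_div_of_le (by positivity) (two_pow_le_Q k hk _)
      _ = (1/2 : ℝ) ^ (blk k hk j) := by rw [div_pow]; norm_num
  · exact (tendsto_pow_atTop_nhds_zero_of_lt_one (by norm_num) (by norm_num)).comp
      (blk_tendsto k hk)

section WithA

variable (a : ℕ → ℝ)
variable (ha : ∀ m j : ℕ, (∑ i ∈ Finset.range m, (k i - 1)) ≤ j →
      j < ∑ i ∈ Finset.range (m + 1), (k i - 1) →
      a j = 1 / ∏ i ∈ Finset.range (m + 1), (k i : ℝ))
include ha

lemma a_eq (j : ℕ) : a j = 1 / Q k (blk k hk j + 1) :=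
  ha (blk k hk j) j (S_blk_le k hk j) (blk_lt k hk j)

lemma a_pos (j : ℕ) : 0 < a j := by
  rw [a_eq k hk a ha j]
  have := Q_pos k hk (blk k hk j + 1)
  positivity

lemma telescope' (j : ℕ) : a j = r k hk j - r k hk (j + 1) := by
  rw [a_eq k hk a ha j, telescope k hk j]

lemma partial_sum (j N : ℕ) :
    ∑ i ∈ Finset.range N, a (j + i) = r k hk j - r k hk (j + N) := by
  induction N with
  | zero => simp
  | succ n ih =>
    rw [Finset.sum_range_succ, ih, telescope' k hk a ha (j + n)]
    have : j + n + 1 = j + (n + 1) := by omega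
    rw [this]
    ring

lemma summable_a : Summable a := by
  apply summable_of_sum_range_le (fun n => (a_pos k hk a ha n).le)
  intro n
  have h := partial_sum k hk a ha 0 n
  simp only [Nat.zero_add] at h
  rw [h]
  have := (r_pos k hk n).le
  linarith

lemma tail_eq (j : ℕ) : ∑' i, a (j + i) = r k hk j := by
  have hsum : Summable (fun i => a (j + i)) := by
    have := (summable_nat_add_iff j).2 (summable_a k hk a ha)
    exact this.congr (fun i => by rw [add_comm])
  have h1 : Tendsto (fun N => ∑ i ∈ Finset.range N, a (j + i)) atTop
      (nhds (∑' i, a (j + i))) := hsum.hasSum.tendsto_sum_nat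
  have h2 : Tendsto (fun N => ∑ i ∈ Finset.range N, a (j + i)) atTop
      (nhds (r k hk j)) := by
    have heq : (fun N => ∑ i ∈ Finset.range N, a (j + i)) =
        fun N => r k hk j - r k hk (j + N) := funext (partial_sum k hk a ha j)
    rw [heq]
    have htt : Tendsto (fun N : ℕ => j + N) atTop atTop :=
      tendsto_atTop_atTop.2 fun b => ⟨b, fun n hn => by omega⟩
    have := (r_tendsto k hk).comp htt
    simpa using tendsto_const_nhds.sub this
  exact tendsto_nhds_unique h1 h2


omit ha in
lemma blk_zero : blk k hk 0 = 0 := by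
  apply blk_eq k hk (by simp [S])
  rw [S_succ]
  simp [S]
  have := hk 0
  omega

lemma tsum_a : ∑' n, a n = 1 := by
  have h : ∑' i, a (0 + i) = r k hk 0 := tail_eq k hk a ha 0
  simp only [Nat.zero_add] at h
  rw [h]
  unfold r
  rw [blk_zero k hk]
  have hS0 : S k 0 = 0 := by simp [S]
  rw [hS0]
  have hQ1 : Q k 1 = (k 0 : ℝ) := by rw [Q_succ]; simp [Q]
  rw [hQ1]
  have : (0:ℝ) < k 0 := by have := hk 0; positivity
  simp
  have := hk 0
  omega

lemma a_antitone : Antitone a := by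
  intro i j hij
  rw [a_eq k hk a ha i, a_eq k hk a ha j]
  apply one_div_le_one_div_of_le (Q_pos k hk _)
  exact Q_mono k hk (by have := blk_mono k hk hij; omega)

lemma a_tail_ge (n : ℕ) : a n ≤ ∑' i, a (n + 1 + i) := by
  rw [tail_eq k hk a ha (n + 1)]
  have h1 : a n = r k hk n - r k hk (n + 1) := telescope' k hk a ha n
  have h2 : 2 / Q k (blk k hk n + 1) ≤ r k hk n := r_ge k hk n
  have h3 : a n = 1 / Q k (blk k hk n + 1) := a_eq k hk a ha n
  have h4 : 2 / Q k (blk k hk n + 1) = 2 * (1 / Q k (blk k hk n + 1)) := by ring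
  linarith

lemma a_mem : a ∈ K :=
  ⟨a_pos k hk a ha, a_antitone k hk a ha, summable_a k hk a ha,
    le_of_eq (tsum_a k hk a ha), a_tail_ge k hk a ha⟩

lemma a_eq_tail {j : ℕ} (h : blk k hk (j + 1) = blk k hk j + 1) :
    a j = ∑' i, a (j + 1 + i) := by
  rw [tail_eq k hk a ha (j + 1)]
  have hj1 : j + 1 = S k (blk k hk j + 1) := by
    have h1 : S k (blk k hk j + 1) ≤ j + 1 := by
      have h2 := S_blk_le k hk (j + 1)
      rw [h] at h2
      exact h2
    have := blk_lt k hk j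
    omega
  have hr2 : r k hk (j + 1) = 1 / Q k (blk k hk j + 1) := by
    unfold r
    rw [h]
    have hz : j + 1 - S k (blk k hk j + 1) = 0 := by omega
    rw [hz, Q_succ k (blk k hk j + 1)]
    have hkm1 : (0:ℝ) < k (blk k hk j + 1) := by have := hk (blk k hk j + 1); positivity
    have hq : (0:ℝ) < Q k (blk k hk j + 1) := Q_pos k hk _
    push_cast
    field_simp
    ring
  rw [hr2, a_eq k hk a ha j]


omit hk ha in
lemma shift_summable (f : ℕ → ℝ) (hf : Summable f) (j : ℕ) :
    Summable fun i => f (j + i) :=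
  ((summable_nat_add_iff j).2 hf).congr (fun i => by rw [add_comm])

lemma rigid (y : ℕ → ℝ) (hy : y ∈ K)
    (C1 : ∑' n, y n = 1)
    (C2 : ∀ j, blk k hk (j + 1) = blk k hk j → y (j + 1) = y j)
    (C3 : ∀ j, blk k hk (j + 1) = blk k hk j + 1 → y j = ∑' i, y (j + 1 + i)) :
    y = a := by
  have hsumy : Summable y := hy.2.2.1
  -- constancy on blocks
  have const : ∀ m t, S k m + t < S k (m + 1) → y (S k m + t) = y (S k m) := by
    intro m t
    induction t with
    | zero => intro _; rfl
    | succ n ih =>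
      intro h
      have h0 : S k m + n < S k (m + 1) := by omega
      have hb1 : blk k hk (S k m + n) = m := blk_eq k hk (by omega) h0
      have hb2 : blk k hk (S k m + n + 1) = m := blk_eq k hk (by omega) (by omega)
      have := C2 (S k m + n) (by rw [hb1, hb2])
      have he : S k m + (n + 1) = S k m + n + 1 := by omega
      rw [he, this, ih h0]
  -- block-end identity
  have key : ∀ m, y (S k m) = ∑' i, y (S k (m + 1) + i) := by
    intro m
    have hkm := hk m
    have hS := S_succ k m
    set n := S k m + (k m - 2) with hn
    have h0 : n < S k (m + 1) := by omega
    have hb1 : blk k hk n = m := blk_eq k hk (by omega) h0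
    have hb2 : n + 1 = S k (m + 1) := by omega
    have hb3 : blk k hk (n + 1) = m + 1 := by
      apply blk_eq k hk (by omega)
      have := hk (m + 1)
      rw [S_succ k (m + 1)]
      omega
    have h3 := C3 n (by rw [hb1, hb3])
    have h4 : y n = y (S k m) := const m (k m - 2) h0
    rw [← h4, h3]
    apply tsum_congr
    intro i
    congr 1
    omega
  -- block sum decomposition
  have shiftsum : ∀ j : ℕ, Summable (fun i => y (j + i)) := by
    intro j
    exact ((summable_nat_add_iff j).2 hsumy).congr (fun i => by rw [add_comm])
  have blocksum : ∀ m, ∑' i, y (S k m + i) =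
      ((k m : ℝ) - 1) * y (S k m) + ∑' i, y (S k (m + 1) + i) := by
    intro m
    have hkm := hk m
    have hf := shiftsum (S k m)
    have hsplit := Summable.sum_add_tsum_nat_add (k m - 1) hf
    rw [← hsplit]
    congr 1
    · rw [Finset.sum_congr rfl (fun i hi => const m i (by
        rw [S_succ]
        have := Finset.mem_range.mp hi
        omega))]
      rw [Finset.sum_const, Finset.card_range, nsmul_eq_mul]
      congr 1
      rw [Nat.cast_sub (by omega)]
      push_cast
      ring
    · apply tsum_congr
      intro i
      congr 1
      rw [S_succ]
      omega
  -- tail values at block starts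
  have Ty : ∀ m, ∑' i, y (S k m + i) = 1 / Q k m := by
    intro m
    induction m with
    | zero =>
      have hS0 : S k 0 = 0 := by simp [S]
      have hQ0 : Q k 0 = 1 := by simp [Q]
      rw [hS0, hQ0]
      simp only [Nat.zero_add]
      rw [C1]
      norm_num
    | succ m ih =>
      have h1 := blocksum m
      have h2 := key m
      rw [ih, h2] at h1
      set T := ∑' i, y (S k (m + 1) + i) with hT
      have hq : (0:ℝ) < Q k m := Q_pos k hk m
      have hkm : (2:ℝ) ≤ k m := by exact_mod_cast hk m
      have h3 : (k m : ℝ) * T = 1 / Q k m := by linarith [h1]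
      rw [Q_succ, eq_div_iff (by positivity)]
      field_simp at h3
      linear_combination h3
  -- conclude
  funext j
  have hSle := S_blk_le k hk j
  have hj : S k (blk k hk j) + (j - S k (blk k hk j)) = j := by omega
  have h1 := const (blk k hk j) (j - S k (blk k hk j)) (by rw [hj]; exact blk_lt k hk j)
  rw [hj] at h1
  rw [h1, key (blk k hk j), Ty (blk k hk j + 1), a_eq k hk a ha j]


lemma extreme_aux (y z : ℕ → ℝ) (hy : y ∈ K) (hz : z ∈ K) (lam : ℝ)
    (h0 : 0 < lam) (h1 : lam < 1)
    (heq : ∀ n, a n = lam * y n + (1 - lam) * z n) : y = a := by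
  have hys : Summable y := hy.2.2.1
  have hzs : Summable z := hz.2.2.1
  have tail_lin : ∀ j, ∑' i, a (j + i) =
      lam * ∑' i, y (j + i) + (1 - lam) * ∑' i, z (j + i) := by
    intro j
    have he : (fun i => a (j + i)) = fun i => lam * y (j + i) + (1 - lam) * z (j + i) :=
      funext fun i => heq _
    rw [he, Summable.tsum_add ((shift_summable y hys j).mul_left lam)
      ((shift_summable z hzs j).mul_left (1 - lam)), tsum_mul_left, tsum_mul_left]
  have C1 : ∑' n, y n = 1 := by
    have htot : lam * ∑' n, y n + (1 - lam) * ∑' n, z n = 1 := by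
      have h := tail_lin 0
      simp only [Nat.zero_add] at h
      rw [← h, tsum_a k hk a ha]
    have e1 : lam * ∑' n, y n ≤ lam * 1 :=
      mul_le_mul_of_nonneg_left hy.2.2.2.1 h0.le
    have e2 : (1 - lam) * ∑' n, z n ≤ (1 - lam) * 1 :=
      mul_le_mul_of_nonneg_left hz.2.2.2.1 (by linarith)
    have e3 : lam * ∑' n, y n = lam * 1 := by linarith
    exact mul_left_cancel₀ h0.ne' e3
  have C2 : ∀ j, blk k hk (j + 1) = blk k hk j → y (j + 1) = y j := by
    intro j hb
    have ha1 : a (j + 1) = a j := by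
      rw [a_eq k hk a ha j, a_eq k hk a ha (j + 1), hb]
    have yd : y (j + 1) ≤ y j := hy.2.1 (Nat.le_succ j)
    have zd : z (j + 1) ≤ z j := hz.2.1 (Nat.le_succ j)
    have e1 : lam * y (j + 1) ≤ lam * y j := mul_le_mul_of_nonneg_left yd h0.le
    have e2 : (1 - lam) * z (j + 1) ≤ (1 - lam) * z j :=
      mul_le_mul_of_nonneg_left zd (by linarith)
    have e0 : lam * y (j + 1) + (1 - lam) * z (j + 1) = lam * y j + (1 - lam) * z j := by
      rw [← heq j, ← heq (j + 1), ha1]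
    have e3 : lam * y (j + 1) = lam * y j := by linarith
    exact mul_left_cancel₀ h0.ne' e3
  have C3 : ∀ j, blk k hk (j + 1) = blk k hk j + 1 → y j = ∑' i, y (j + 1 + i) := by
    intro j hb
    have h4 : a j = ∑' i, a (j + 1 + i) := a_eq_tail k hk a ha hb
    have h5 := tail_lin (j + 1)
    have yd : y j ≤ ∑' i, y (j + 1 + i) := hy.2.2.2.2 j
    have zd : z j ≤ ∑' i, z (j + 1 + i) := hz.2.2.2.2 j
    have e1 : lam * y j ≤ lam * ∑' i, y (j + 1 + i) := mul_le_mul_of_nonneg_left yd h0.le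
    have e2 : (1 - lam) * z j ≤ (1 - lam) * ∑' i, z (j + 1 + i) :=
      mul_le_mul_of_nonneg_left zd (by linarith)
    have e0 : lam * y j + (1 - lam) * z j =
        lam * ∑' i, y (j + 1 + i) + (1 - lam) * ∑' i, z (j + 1 + i) := by
      rw [← heq j, h4, h5]
    have e3 : lam * y j = lam * ∑' i, y (j + 1 + i) := by linarith
    exact mul_left_cancel₀ h0.ne' e3
  exact rigid k hk a ha y hy C1 C2 C3

end WithA
end Stmt13aux

/-- If `a` is obtained by concatenating, for `m = 0, 1, 2, …`, a block of
`k_m − 1` entries each equal to `1/(k_0 ⋯ k_m)` (0-indexed), then `a` is an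
extreme point of `K`. -/
theorem stmt13 (k : ℕ → ℕ) (hk : ∀ n, 2 ≤ k n) (a : ℕ → ℝ)
    (ha : ∀ m j : ℕ, (∑ i ∈ Finset.range m, (k i - 1)) ≤ j →
      j < ∑ i ∈ Finset.range (m + 1), (k i - 1) →
      a j = 1 / ∏ i ∈ Finset.range (m + 1), (k i : ℝ)) :
    IsExtremePt K a := by
  refine ⟨Stmt13aux.a_mem k hk a ha, ?_⟩
  intro y hy z hz lam h0 h1 heq
  have heq' : ∀ n, a n = lam * y n + (1 - lam) * z n := fun n => congrFun heq n
  exact ⟨Stmt13aux.extreme_aux k hk a ha y z hy hz lam h0 h1 heq',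
    Stmt13aux.extreme_aux k hk a ha z y hz hy (1 - lam) (by linarith) (by linarith)
      (fun n => by rw [heq' n]; ring)⟩
end

section
/- Let a be an extreme point of K. Then there exists a sequence of integers (k_n)_{n≥1} with k_n ≥ 2 for all n such that a is the sequence obtained by concatenating, for n = 1, 2, 3, …, a block of k_n − 1 consecutive entries each equal to 1/(k_1 k_2 ⋯ k_n). -/
noncomputable def tl (a : ℕ → ℝ) (n : ℕ) : ℝ := ∑' i, a (n + i)
lemma summable_shift {a : ℕ → ℝ} (h : Summable a) (n : ℕ) :
    Summable (fun i => a (n + i)) := by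
  have := (summable_nat_add_iff n).2 h
  simpa [Nat.add_comm] using this
lemma tl_succ {a : ℕ → ℝ} (h : Summable a) (n : ℕ) :
    tl a n = a n + tl a (n + 1) := by
  have h1 := Summable.tsum_eq_zero_add (summable_shift h n)
  simpa [tl, Nat.add_comm, Nat.add_assoc, Nat.add_left_comm] using h1
lemma tl_pos {a : ℕ → ℝ} (hpos : ∀ n, 0 < a n) (h : Summable a) (n : ℕ) :
    0 < tl a n :=
  Summable.tsum_pos (summable_shift h n) (fun i => (hpos _).le) 0 (hpos _)
lemma tl_Ico {a : ℕ → ℝ} (h : Summable a) : ∀ {m N : ℕ}, m ≤ N →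
    tl a m = (∑ j ∈ Finset.Ico m N, a j) + tl a N := by
  intro m N hmN
  induction N with
  | zero => simp_all
  | succ N ih =>
    rcases Nat.lt_or_ge m (N+1) with hlt | hge
    · have hmN' : m ≤ N := by omega
      rw [Finset.sum_Ico_succ_top hmN', ih hmN', tl_succ h N]
      ring
    · have : m = N + 1 := by omega
      subst this; simp

set_option maxHeartbeats 2000000 in
lemma master {a : ℕ → ℝ} (hext : IsExtremePt K a) (n : ℕ) :
    a n = a (n + 1) ∨ a n = tl a (n + 1) := by
  obtain ⟨⟨hpos, hanti, hsum, hle1, htail⟩, hex⟩ := hext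
  have htail' : ∀ m, a m ≤ tl a (m + 1) := htail
  by_contra hcon
  push_neg at hcon
  obtain ⟨hne1, hne2⟩ := hcon
  have hlt : a (n + 1) < a n := lt_of_le_of_ne (hanti (Nat.le_succ n)) (fun h => hne1 h.symm)
  have hslack : a n < tl a (n + 1) := lt_of_le_of_ne (htail' n) hne2
  -- block start
  have hpex : ∃ p, a p = a n := ⟨n, rfl⟩
  set p := Nat.find hpex with hpdef
  have hap : a p = a n := Nat.find_spec hpex
  have hpn : p ≤ n := Nat.find_min' hpex rfl
  have hblock : ∀ j, p ≤ j → j ≤ n → a j = a n := fun j h1 h2 =>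
    le_antisymm (hap ▸ hanti h1) (hanti h2)
  set c : ℝ := a n with hc
  set t : ℝ := tl a (n + 1) with ht
  have hcpos : 0 < c := hpos n
  have htpos : 0 < t := tl_pos hpos hsum (n + 1)
  have htc : c < t := hslack
  have han1 : a (n + 1) < c := hlt
  have han1t : a (n + 1) ≤ t := le_trans hlt.le htc.le
  set L : ℕ := n + 1 - p with hLdef
  have hL1 : 1 ≤ L := by omega
  set G : ℝ := if p = 0 then 1 else a (p - 1) - c with hGdef
  have hGpos : 0 < G := by
    rcases Nat.eq_zero_or_pos p with h0 | h0
    · simp [hGdef, h0]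
    · have h1 : p - 1 < p := by omega
      have h2 : a (p - 1) ≠ a n := Nat.find_min hpex h1
      have h3 : a p ≤ a (p - 1) := hanti (by omega)
      have : c < a (p - 1) := lt_of_le_of_ne (hap ▸ h3) (fun h => h2 h.symm)
      simp only [hGdef, if_neg (by omega : p ≠ 0)]
      linarith
  set η : ℝ := min (min (1/4) ((t - c)/(4*t))) (min ((c - a (n+1))/(4*t))
      (min (c/(4*t)) (G/(4*t)))) with hηdef
  have h4t : (0:ℝ) < 4 * t := by linarith
  have hηpos : 0 < η := by
    refine lt_min (lt_min (by norm_num) (div_pos (by linarith) h4t))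
      (lt_min (div_pos (by linarith) h4t) (lt_min (div_pos hcpos h4t) (div_pos hGpos h4t)))
  have hη1 : η ≤ 1/4 := le_trans (min_le_left _ _) (min_le_left _ _)
  have hη2 : η * (4*t) ≤ t - c := by
    have h : η ≤ (t - c)/(4*t) := le_trans (min_le_left _ _) (min_le_right _ _)
    rwa [le_div_iff₀ h4t] at h
  have hη3 : η * (4*t) ≤ c - a (n+1) := by
    have h : η ≤ (c - a (n+1))/(4*t) :=
      le_trans (min_le_right _ _) (min_le_left _ _)
    rwa [le_div_iff₀ h4t] at h
  have hη4 : η * (4*t) ≤ c := by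
    have h : η ≤ c/(4*t) :=
      le_trans (min_le_right _ _) (le_trans (min_le_right _ _) (min_le_left _ _))
    rwa [le_div_iff₀ h4t] at h
  have hη5 : η * (4*t) ≤ G := by
    have h : η ≤ G/(4*t) :=
      le_trans (min_le_right _ _) (le_trans (min_le_right _ _) (min_le_right _ _))
    rwa [le_div_iff₀ h4t] at h
  clear_value η
  clear hηdef
  set δ : ℝ := η * t / L with hδdef
  have hL1' : (1:ℝ) ≤ (L:ℝ) := by exact_mod_cast hL1
  have hLpos : (0:ℝ) < (L:ℝ) := by linarith
  have hδpos : 0 < δ := div_pos (mul_pos hηpos htpos) hLpos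
  have hLδ : (L:ℝ) * δ = η * t := by
    rw [hδdef]; field_simp
  have hδle : δ ≤ η * t := by
    rw [hδdef, div_le_iff₀ hLpos]
    nlinarith [mul_nonneg (mul_pos hηpos htpos).le (by linarith [hL1'] : (0:ℝ) ≤ (L:ℝ) - 1)]
  -- the perturbation
  set v : ℕ → ℝ := fun i => if i < p then 0 else if i ≤ n then -δ else η * a i with hvdef
  have hvlow : ∀ i, i < p → v i = 0 := by intro i h; simp [hvdef, h]
  have hvmid : ∀ i, p ≤ i → i ≤ n → v i = -δ := by
    intro i h1 h2; simp [hvdef, Nat.not_lt.2 h1, h2]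
  have hvhigh : ∀ i, n < i → v i = η * a i := by
    intro i h
    have h1 : ¬ i < p := by omega
    have h2 : ¬ i ≤ n := by omega
    simp only [hvdef, if_neg h1, if_neg h2]
  clear_value v
  clear hvdef
  have hvshift : ∀ i, v (n + 1 + i) = η * a (n + 1 + i) := fun i => hvhigh _ (by omega)
  have hvsum : Summable v := by
    rw [← summable_nat_add_iff (n+1)]
    have h0 : Summable (fun m => η * a (m + (n+1))) :=
      ((summable_nat_add_iff (n+1)).2 hsum).mul_left η
    exact h0.congr fun m => (hvhigh (m + (n+1)) (by omega)).symm
  have hVtop : ∑' i, v (n + 1 + i) = η * t := by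
    rw [tsum_congr hvshift, tsum_mul_left]
    rfl
  have hVIco : ∀ m, m ≤ n + 1 → ∑' i, v (m + i) =
      (∑ j ∈ Finset.Ico m (n+1), v j) + η * t := by
    intro m hm
    have h1 := Summable.sum_add_tsum_nat_add (f := fun i => v (m + i)) (n + 1 - m)
      (summable_shift hvsum m)
    have h2 : ∑' (i : ℕ), v (m + (i + (n + 1 - m))) = η * t := by
      rw [← hVtop]
      exact tsum_congr fun i => by congr 1; omega
    have h3 : ∑ j ∈ Finset.Ico m (n+1), v j
        = ∑ i ∈ Finset.range (n + 1 - m), v (m + i) := Finset.sum_Ico_eq_sum_range v m (n+1)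
    rw [h3]
    rw [h2] at h1
    linarith [h1]
  have hIcoMid : ∀ m, p ≤ m → ∑ j ∈ Finset.Ico m (n+1), v j =
      -(((n + 1 - m : ℕ)):ℝ) * δ := by
    intro m hm
    have h0 : ∑ j ∈ Finset.Ico m (n+1), v j = ∑ _j ∈ Finset.Ico m (n+1), (-δ) :=
      Finset.sum_congr rfl (fun j hj => by
        rw [Finset.mem_Ico] at hj
        exact hvmid j (le_trans hm hj.1) (by omega))
    rw [h0, Finset.sum_const, Nat.card_Ico]
    push_cast
    ring
  have hVmid : ∀ m, p ≤ m → m ≤ n + 1 → ∑' i, v (m + i) =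
      -(((n + 1 - m : ℕ)):ℝ) * δ + η * t := by
    intro m h1 h2
    rw [hVIco m h2, hIcoMid m h1]
  have hV0 : ∀ m, m ≤ p → ∑' i, v (m + i) = 0 := by
    intro m hm
    rw [hVIco m (by omega)]
    rw [← Finset.sum_Ico_consecutive v hm (by omega : p ≤ n + 1)]
    have h0 : ∑ j ∈ Finset.Ico m p, v j = 0 := by
      refine Finset.sum_eq_zero (fun j hj => ?_)
      rw [Finset.mem_Ico] at hj
      exact hvlow j hj.2
    have hcast : (((n + 1 - p : ℕ)):ℝ) = (L:ℝ) := by rw [hLdef]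
    rw [h0, hIcoMid p le_rfl, hcast]
    linarith [hLδ]
  have hVhigh2 : ∀ m, n + 1 ≤ m → ∑' i, v (m + i) = η * tl a m := by
    intro m hm
    rw [tsum_congr (fun i => hvhigh (m + i) (by omega)), tsum_mul_left]
    rfl
  have htlblock : ∀ m, p ≤ m → m < n → tl a (m + 1) = ((n - m : ℕ):ℝ) * c + t := by
    intro m h1 h2
    rw [tl_Ico hsum (show m + 1 ≤ n + 1 by omega)]
    have h0 : ∑ j ∈ Finset.Ico (m+1) (n+1), a j = ∑ _j ∈ Finset.Ico (m+1) (n+1), c :=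
      Finset.sum_congr rfl (fun j hj => by
        rw [Finset.mem_Ico] at hj
        exact hblock j (by omega) (by omega))
    rw [h0, Finset.sum_const, Nat.card_Ico]
    have : n + 1 - (m + 1) = n - m := by omega
    rw [this, ← ht]
    simp [smul_eq_mul]
  clear_value p c t L G δ
  clear hpdef hδdef hne1 hne2
  have hηt4 : η * t ≤ t / 4 := by nlinarith [mul_le_mul_of_nonneg_right hη1 htpos.le]
  have hmem : ∀ s : ℝ, -1 ≤ s → s ≤ 1 → (fun i => a i + s * v i) ∈ K := by
    intro s hs1 hs2
    have h1sη : (0:ℝ) < 1 + s * η := by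
      nlinarith [mul_nonneg (by linarith : (0:ℝ) ≤ 1 + s) hηpos.le]
    have g1 : s * (-δ) ≤ δ := by
      nlinarith [mul_nonneg (by linarith : (0:ℝ) ≤ 1 + s) hδpos.le]
    have g1' : -δ ≤ s * (-δ) := by
      nlinarith [mul_nonneg (by linarith : (0:ℝ) ≤ 1 - s) hδpos.le]
    refine ⟨?_, ?_, ?_, ?_, ?_⟩
    · -- positivity
      intro i
      show 0 < a i + s * v i
      rcases Nat.lt_or_ge i p with h | h
      · rw [hvlow i h]; simpa using hpos i
      · rcases le_or_gt i n with h2 | h2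
        · rw [hvmid i h h2, hblock i h h2]
          nlinarith [g1', hδle, hη4, hcpos, htpos]
        · rw [hvhigh i h2]
          nlinarith [mul_nonneg (by linarith : (0:ℝ) ≤ 1 + s)
              (mul_nonneg hηpos.le (hpos i).le),
            mul_pos (by linarith : (0:ℝ) < 1 - η) (hpos i)]
    · -- antitone
      refine antitone_nat_of_succ_le (fun i => ?_)
      show a (i+1) + s * v (i+1) ≤ a i + s * v i
      rcases Nat.lt_or_ge (i+1) p with hA | hA
      · rw [hvlow i (by omega), hvlow (i+1) hA]
        simpa using hanti (Nat.le_succ i)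
      · rcases Nat.lt_or_ge i p with hB | hB
        · -- i + 1 = p
          have hip : i + 1 = p := by omega
          rw [hvlow i hB, hvmid (i+1) hA (by omega)]
          have hGeq : G = a i - c := by
            simp only [hGdef, if_neg (by omega : ¬ p = 0)]
            congr 2
            omega
          have hac : a (i+1) = c := hblock (i+1) hA (by omega)
          rw [hac]
          nlinarith [g1, hδle, hη5, hGpos, htpos]
        · rcases Nat.lt_or_ge (i+1) (n+1) with hC | hC
          · -- inside block
            rw [hvmid i hB (by omega), hvmid (i+1) hA (by omega),
              hblock i hB (by omega), hblock (i+1) hA (by omega)]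
          · rcases Nat.lt_or_ge i (n+1) with hD | hD
            · -- i = n
              have hin : i = n := by omega
              subst hin
              rw [hvmid i hB le_rfl, hvhigh (i+1) (by omega), ← hc]
              have hm1 : η * a (i+1) ≤ η * t :=
                mul_le_mul_of_nonneg_left han1t hηpos.le
              have hm2 : (0:ℝ) ≤ (1 - s) * (η * a (i+1)) :=
                mul_nonneg (by linarith) (mul_nonneg hηpos.le (hpos _).le)
              nlinarith [g1', hδle, hη3, hm1, hm2]
            · -- i > n
              rw [hvhigh i (by omega), hvhigh (i+1) (by omega)]
              nlinarith [mul_nonneg h1sη.le (sub_nonneg.2 (hanti (Nat.le_succ i)))]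
    · exact hsum.add (hvsum.mul_left s)
    · have htv : ∑' i, v i = 0 := by
        have h0 := hV0 0 (Nat.zero_le p)
        simpa using h0
      rw [Summable.tsum_add hsum (hvsum.mul_left s), tsum_mul_left, htv]
      simpa using hle1
    · -- tail constraints
      intro m
      show a m + s * v m ≤ ∑' i, (a (m+1+i) + s * v (m+1+i))
      rw [Summable.tsum_add (summable_shift hsum (m+1)) ((summable_shift hvsum (m+1)).mul_left s),
        tsum_mul_left]
      show a m + s * v m ≤ tl a (m+1) + s * ∑' i, v (m+1+i)
      rcases Nat.lt_or_ge m p with h | h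
      · rw [hvlow m h, hV0 (m+1) (by omega)]
        have := htail' m
        simpa using this
      · rcases Nat.lt_or_ge m n with h2 | h2
        · -- inside block, strict slack ≥ t
          rw [hvmid m h (by omega), hVmid (m+1) (by omega) (by omega),
            htlblock m h h2, hblock m h (by omega)]
          have hnm : n + 1 - (m + 1) = n - m := by omega
          rw [hnm]
          set r : ℝ := ((n - m : ℕ) : ℝ) with hrdef
          have hr1 : (1:ℝ) ≤ r := by
            rw [hrdef]; exact_mod_cast (by omega : 1 ≤ n - m)
          have hrL : r ≤ (L:ℝ) := by
            rw [hrdef]; exact_mod_cast (by omega : n - m ≤ L)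
          have hrδ : r * δ ≤ η * t := by
            nlinarith [mul_le_mul_of_nonneg_right hrL hδpos.le, hLδ]
          have g2 : -(r*δ) - η*t ≤ s * (-r * δ + η*t) := by
            nlinarith [mul_nonneg (by linarith : (0:ℝ) ≤ 1 - s)
                (mul_nonneg (by linarith : (0:ℝ) ≤ r) hδpos.le),
              mul_nonneg (by linarith : (0:ℝ) ≤ 1 + s) (mul_pos hηpos htpos).le]
          have g3 : c ≤ r * c := by
            nlinarith [mul_nonneg (by linarith : (0:ℝ) ≤ r - 1) hcpos.le]
          have g4 : δ + 2*(η*t) ≤ t := by linarith [hδle, hηt4, htpos]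
          linarith
        · rcases Nat.lt_or_ge m (n+1) with h3 | h3
          · -- m = n
            have hmn : m = n := by omega
            subst hmn
            rw [hvmid m h le_rfl, hVhigh2 (m+1) le_rfl]
            rw [← ht, ← hc]
            have g5 : -(η * t) ≤ s * (η * t) := by
              nlinarith [mul_nonneg (by linarith : (0:ℝ) ≤ 1 + s)
                (mul_pos hηpos htpos).le]
            linarith
          · -- m > n
            rw [hvhigh m (by omega), hVhigh2 (m+1) (by omega)]
            nlinarith [mul_nonneg h1sη.le (sub_nonneg.2 (htail' m))]
  have hy := hmem 1 (by norm_num) (by norm_num)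
  have hz := hmem (-1) (by norm_num) (by norm_num)
  have hcomb := hex _ hy _ hz (1/2) (by norm_num) (by norm_num)
    (by funext i; ring)
  have h1 := congrFun hcomb.1 (n+1)
  rw [hvhigh (n+1) (by omega)] at h1
  nlinarith [mul_pos hηpos (hpos (n+1))]

lemma tsum_eq_one {a : ℕ → ℝ} (hext : IsExtremePt K a) : ∑' n, a n = 1 := by
  obtain ⟨⟨hpos, hanti, hsum, hle1, htail⟩, hex⟩ := hext
  set S := ∑' n, a n with hS
  have hSpos : 0 < S := Summable.tsum_pos hsum (fun i => (hpos i).le) 0 (hpos 0)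
  by_contra hne
  have hSlt : S < 1 := lt_of_le_of_ne hle1 hne
  set ε : ℝ := 1 - S with hε
  have hεpos : 0 < ε := by simp [hε]; linarith
  have hmem : ∀ s : ℝ, |s| ≤ 1 → (fun i => (1 + s * ε) * a i) ∈ K := by
    intro s hs
    rw [abs_le] at hs
    have hc : 0 < 1 + s * ε := by nlinarith
    refine ⟨fun n => mul_pos hc (hpos n), fun m n h => ?_, hsum.mul_left _, ?_, fun n => ?_⟩
    · exact mul_le_mul_of_nonneg_left (hanti h) hc.le
    · rw [tsum_mul_left, ← hS]
      nlinarith [sq_nonneg (1 - S)]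
    · rw [tsum_mul_left]
      exact mul_le_mul_of_nonneg_left (htail n) hc.le
  have h1 : |(1:ℝ)| ≤ 1 := by norm_num
  have h2 : |(-1:ℝ)| ≤ 1 := by norm_num
  have := hex _ (hmem 1 h1) _ (hmem (-1) h2) (1/2) (by norm_num) (by norm_num)
    (by funext i; ring)
  have := congrFun this.1 0
  nlinarith [hpos 0]

/-- Every extreme point of `K` is obtained, for some integers `k_m ≥ 2`, by
concatenating for `m = 0, 1, 2, …` a block of `k_m − 1` entries each equal to
`1/(k_0 ⋯ k_m)` (0-indexed). -/
theorem stmt14 (a : ℕ → ℝ) (hext : IsExtremePt K a) :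
    ∃ k : ℕ → ℕ, (∀ n, 2 ≤ k n) ∧
      ∀ m j : ℕ, (∑ i ∈ Finset.range m, (k i - 1)) ≤ j →
        j < ∑ i ∈ Finset.range (m + 1), (k i - 1) →
        a j = 1 / ∏ i ∈ Finset.range (m + 1), (k i : ℝ) := by
  obtain ⟨⟨hpos, hanti, hsum, hle1, htail⟩, -⟩ := id hext
  have htail' : ∀ m, a m ≤ tl a (m + 1) := htail
  have hone : tl a 0 = 1 := by
    have h0 : tl a 0 = ∑' n, a n := by
      refine tsum_congr fun i => ?_
      simp
    rw [h0, tsum_eq_one hext]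
  have hmaster := master hext
  -- strict decrease happens beyond any point
  have hdec : ∀ p, ∃ q, p ≤ q ∧ a (q + 1) < a q := by
    intro p
    by_contra hcon
    push_neg at hcon
    have hconst : ∀ j, a (p + j) = a p := by
      intro j
      induction j with
      | zero => rfl
      | succ j ih =>
        have h1 := hcon (p + j) (by omega)
        have h2 := hanti (Nat.le_succ (p + j))
        have h3 : a (p + j + 1) = a (p + j) := le_antisymm h2 h1
        rw [show p + (j + 1) = p + j + 1 by omega, h3, ih]
    have hlim := hsum.tendsto_atTop_zero
    rw [Metric.tendsto_atTop] at hlim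
    obtain ⟨N, hN⟩ := hlim (a p) (hpos p)
    have h4 := hN (max N p) (le_max_left _ _)
    have h5 : a (max N p) = a p := by
      have h6 := hconst (max N p - p)
      rwa [show p + (max N p - p) = max N p by omega] at h6
    rw [h5, Real.dist_eq, sub_zero, abs_of_pos (hpos p)] at h4
    exact lt_irrefl _ h4
  have hexq : ∀ p, ∃ q, p ≤ q ∧ a q = tl a (q + 1) := by
    intro p
    obtain ⟨q, h1, h2⟩ := hdec p
    rcases hmaster q with h | h
    · exact absurd h (by linarith)
    · exact ⟨q, h1, h⟩
  set nxt : ℕ → ℕ := fun p => Nat.find (hexq p) with hnxt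
  have hnxt_ge : ∀ p, p ≤ nxt p := fun p => (Nat.find_spec (hexq p)).1
  have hnxt_tight : ∀ p, a (nxt p) = tl a (nxt p + 1) := fun p => (Nat.find_spec (hexq p)).2
  have hnxt_const : ∀ p j, p ≤ j → j ≤ nxt p → a j = a (nxt p) := by
    intro p
    have step : ∀ m, p ≤ m → m < nxt p → a m = a (m + 1) := by
      intro m h1 h2
      rcases hmaster m with h | h
      · exact h
      · exact absurd (⟨h1, h⟩ : p ≤ m ∧ a m = tl a (m + 1)) (Nat.find_min (hexq p) h2)
    have aux : ∀ d j, p ≤ j → j + d = nxt p → a j = a (nxt p) := by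
      intro d
      induction d with
      | zero => intro j h1 h2; rw [show j = nxt p by omega]
      | succ d ih =>
        intro j h1 h2
        rw [step j h1 (by omega)]
        exact ih (j + 1) (by omega) (by omega)
    exact fun j h1 h2 => aux (nxt p - j) j h1 (by omega)
  have hblocksum : ∀ p, tl a p = ((nxt p + 2 - p : ℕ) : ℝ) * a (nxt p) := by
    intro p
    rw [tl_Ico hsum (show p ≤ nxt p + 1 by have := hnxt_ge p; omega)]
    have h0 : ∑ j ∈ Finset.Ico p (nxt p + 1), a j
        = ∑ _j ∈ Finset.Ico p (nxt p + 1), a (nxt p) :=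
      Finset.sum_congr rfl (fun j hj => by
        rw [Finset.mem_Ico] at hj
        exact hnxt_const p j hj.1 (by omega))
    rw [h0, Finset.sum_const, Nat.card_Ico, ← hnxt_tight p, nsmul_eq_mul]
    have hc : ((nxt p + 2 - p : ℕ) : ℝ) = ((nxt p + 1 - p : ℕ) : ℝ) + 1 := by
      have h := hnxt_ge p
      have h2 : nxt p + 2 - p = (nxt p + 1 - p) + 1 := by omega
      rw [h2]
      push_cast
      ring
    rw [hc]
    ring
  obtain ⟨P, hP0, hPs⟩ : ∃ P : ℕ → ℕ, P 0 = 0 ∧ ∀ m, P (m + 1) = nxt (P m) + 1 :=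
    ⟨fun m => Nat.rec 0 (fun _ pm => nxt pm + 1) m, rfl, fun m => rfl⟩
  set k : ℕ → ℕ := fun m => nxt (P m) + 2 - P m with hk
  have hk2 : ∀ m, 2 ≤ k m := by
    intro m
    have := hnxt_ge (P m)
    simp only [hk]
    omega
  have hkpos : ∀ m, (0:ℝ) < (k m : ℝ) := by
    intro m
    have := hk2 m
    exact_mod_cast (by omega : 0 < k m)
  have hprodpos : ∀ m, (0:ℝ) < ∏ i ∈ Finset.range m, (k i : ℝ) :=
    fun m => Finset.prod_pos (fun i _ => hkpos i)
  have step2 : ∀ m, tl a (P m) = (∏ i ∈ Finset.range m, (k i : ℝ))⁻¹ →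
      a (nxt (P m)) = (∏ i ∈ Finset.range (m + 1), (k i : ℝ))⁻¹ := by
    intro m hm
    have hb := hblocksum (P m)
    have hcast : ((nxt (P m) + 2 - P m : ℕ) : ℝ) = (k m : ℝ) := by rw [hk]
    rw [hcast, hm] at hb
    rw [Finset.prod_range_succ, mul_inv]
    have h1 : (k m : ℝ) ≠ 0 := (hkpos m).ne'
    calc a (nxt (P m)) = (k m : ℝ)⁻¹ * ((k m : ℝ) * a (nxt (P m))) := by field_simp
      _ = (k m : ℝ)⁻¹ * (∏ i ∈ Finset.range m, (k i : ℝ))⁻¹ := by rw [← hb]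
      _ = (∏ i ∈ Finset.range m, (k i : ℝ))⁻¹ * (k m : ℝ)⁻¹ := by ring
  have Hm : ∀ m, tl a (P m) = (∏ i ∈ Finset.range m, (k i : ℝ))⁻¹ := by
    intro m
    induction m with
    | zero => rw [hP0]; simp [hone]
    | succ m ih =>
      rw [hPs m, ← hnxt_tight (P m)]
      exact step2 m ih
  have hpos_eq : ∀ m, P m = ∑ i ∈ Finset.range m, (k i - 1) := by
    intro m
    induction m with
    | zero => simpa using hP0
    | succ m ih =>
      rw [Finset.sum_range_succ, ← ih, hPs m]
      have := hnxt_ge (P m)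
      simp only [hk]
      omega
  refine ⟨k, hk2, ?_⟩
  intro m j h1 h2
  rw [← hpos_eq m] at h1
  rw [← hpos_eq (m + 1), hPs m] at h2
  have hja : a j = a (nxt (P m)) := hnxt_const (P m) j h1 (by omega)
  rw [hja, one_div]
  exact step2 m (Hm m)
end
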